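/- arXiv:0911.1602 — 10 statements merged into one kernel-verified Lean document; each statement's English description precedes it below -/
import Mathlib

section
/- Let T be a 3-form on a Euclidean vector space V with orthonormal basis e_1,...,e_n, and define the 4-form σ_T := (1/2) Σ_i (e_i ⌟ T) ∧ (e_i ⌟ T). Then for all X,Y,Z,W in V, σ_T(X,Y,Z,W) = ⟨T(X,Y),T(Z,W)⟩ + ⟨T(Y,Z),T(X,W)⟩ + ⟨T(Z,X),T(Y,W)⟩, where T(X,Y) denotes the vector with ⟨T(X,Y),Z⟩ = T(X,Y,Z). -/
/-- For a 3-form `T` on a Euclidean vector space with orthonormal basis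
`e₁,…,eₙ`, the 4-form `σ_T := (1/2) ∑ᵢ (eᵢ ⌟ T) ∧ (eᵢ ⌟ T)` satisfies
`σ_T(X,Y,Z,W) = ⟨T(X,Y),T(Z,W)⟩ + ⟨T(Y,Z),T(X,W)⟩ + ⟨T(Z,X),T(Y,W)⟩`,
where `T(X,Y)` is the vector with `⟨T(X,Y),Z⟩ = T(X,Y,Z)`.  The wedge product of the two
2-forms `eᵢ ⌟ T` is written out by the standard shuffle formula. -/
theorem sigma_T_formula {n : ℕ}
    (T : EuclideanSpace ℝ (Fin n) → EuclideanSpace ℝ (Fin n) → EuclideanSpace ℝ (Fin n) → ℝ)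
    (hlin : ∀ Y Z, IsLinearMap ℝ fun X => T X Y Z)
    (hskew1 : ∀ X Y Z, T X Y Z = - T Y X Z)
    (hskew2 : ∀ X Y Z, T X Y Z = - T X Z Y)
    (t : EuclideanSpace ℝ (Fin n) → EuclideanSpace ℝ (Fin n) → EuclideanSpace ℝ (Fin n))
    (ht : ∀ X Y Z, (inner ℝ (t X Y) Z : ℝ) = T X Y Z)
    (e : OrthonormalBasis (Fin n) ℝ (EuclideanSpace ℝ (Fin n)))
    (X Y Z W : EuclideanSpace ℝ (Fin n)) :
    (1/2 : ℝ) * ∑ i, (T (e i) X Y * T (e i) Z W - T (e i) X Z * T (e i) Y W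
      + T (e i) X W * T (e i) Y Z + T (e i) Y Z * T (e i) X W
      - T (e i) Y W * T (e i) X Z + T (e i) Z W * T (e i) X Y)
      = (inner ℝ (t X Y) (t Z W) : ℝ) + inner ℝ (t Y Z) (t X W) + inner ℝ (t Z X) (t Y W) := by
  have h : ∀ A B C D : EuclideanSpace ℝ (Fin n),
      (inner ℝ (t A B) (t C D) : ℝ) = ∑ i, T (e i) A B * T (e i) C D := by
    intro A B C D
    rw [← e.sum_inner_mul_inner (t A B) (t C D)]
    refine Finset.sum_congr rfl fun i _ => ?_
    have h1 : (inner ℝ (t A B) (e i) : ℝ) = T (e i) A B := by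
      rw [ht]
      rw [hskew2 A B (e i), hskew1 A (e i) B]
      ring
    have h2 : (inner ℝ (e i) (t C D) : ℝ) = T (e i) C D := by
      rw [real_inner_comm, ht]
      rw [hskew2 C D (e i), hskew1 C (e i) D]
      ring
    rw [h1, h2]
  rw [h, h, h, Finset.mul_sum, ← Finset.sum_add_distrib, ← Finset.sum_add_distrib]
  refine Finset.sum_congr rfl fun i _ => ?_
  rw [hskew2 (e i) Z X]
  ring
end

section
/- Let T be a 3-form on a Euclidean vector space V and let X ∈ V. The natural action of the 2-form X ⌟ T (viewed as a skew-symmetric endomorphism) on the 3-form T satisfies ((X ⌟ T)·T)(Y,Z,W) = σ_T(Y,Z,W,X) for all Y,Z,W, where σ_T is the 4-form defined by σ_T(X,Y,Z,W) = ⟨T(X,Y),T(Z,W)⟩ + ⟨T(Y,Z),T(X,W)⟩ + ⟨T(Z,X),T(Y,W)⟩. -/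
/-- For a 3-form `T` on a Euclidean vector space and `X ∈ V`, the natural
action of the 2-form `X ⌟ T` (viewed as the skew-symmetric endomorphism `Y ↦ T(X,Y)`) on the
3-form `T` satisfies `((X ⌟ T)·T)(Y,Z,W) = σ_T(Y,Z,W,X)`, where
`σ_T(X,Y,Z,W) = ⟨T(X,Y),T(Z,W)⟩ + ⟨T(Y,Z),T(X,W)⟩ + ⟨T(Z,X),T(Y,W)⟩`. -/
theorem two_form_action_on_torsion {n : ℕ}
    (T : EuclideanSpace ℝ (Fin n) → EuclideanSpace ℝ (Fin n) → EuclideanSpace ℝ (Fin n) → ℝ)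
    (hlin : ∀ Y Z, IsLinearMap ℝ fun X => T X Y Z)
    (hskew1 : ∀ X Y Z, T X Y Z = - T Y X Z)
    (hskew2 : ∀ X Y Z, T X Y Z = - T X Z Y)
    (t : EuclideanSpace ℝ (Fin n) → EuclideanSpace ℝ (Fin n) → EuclideanSpace ℝ (Fin n))
    (ht : ∀ X Y Z, (inner ℝ (t X Y) Z : ℝ) = T X Y Z)
    (X Y Z W : EuclideanSpace ℝ (Fin n)) :
    - T (t X Y) Z W - T Y (t X Z) W - T Y Z (t X W)
      = (inner ℝ (t Y Z) (t W X) : ℝ) + inner ℝ (t Z W) (t Y X) + inner ℝ (t W Y) (t Z X) := by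
  have cyc : ∀ A B C, T A B C = T C A B := by
    intro A B C
    rw [hskew1 A B C, hskew2 B A C, hskew1 B C A, hskew2 C B A]
    ring
  have sw : ∀ A B C D : EuclideanSpace ℝ (Fin n),
      (inner ℝ (t A B) (t C D) : ℝ) = - inner ℝ (t A B) (t D C) := by
    intro A B C D
    rw [real_inner_comm (t C D) (t A B), real_inner_comm (t D C) (t A B), ht, ht,
      hskew1 C D (t A B)]
  rw [cyc (t X Y) Z W, cyc W (t X Y) Z, cyc Y (t X Z) W, ← ht, ← ht, ← ht,
    sw Z W X Y, sw W Y X Z, sw Y Z X W]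
  ring
end

section
/- Let ∇ be a flat metric connection with totally skew-symmetric torsion T on a Riemannian manifold. Then the Riemannian Ricci tensor satisfies Ric^g(X,Y) = (1/4) Σ_i ⟨T(X,e_i), T(Y,e_i)⟩ for any local orthonormal frame e_i, and the scalar curvature equals Scal^g = (3/2)‖T‖². In particular, Ric^g(X,X) ≥ 0, with equality if and only if X ⌟ T = 0. -/
/-- An abstract calculus of vector fields on a Riemannian manifold: `C` is the ring of smooth
functions, `X` the `C`-module of vector fields, `g` the Riemannian metric, `D` the directional
derivative, `bracket` the Lie bracket and `lc` the Levi-Civita connection `∇^g`. -/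
structure VectorFieldCalculus (C X : Type*) [CommRing C] [Algebra ℝ C]
    [AddCommGroup X] [Module C X] where
  g : X → X → C
  D : X → C → C
  bracket : X → X → X
  lc : X → X → X
  g_symm : ∀ a b, g a b = g b a
  g_add_left : ∀ a b c, g (a + b) c = g a c + g b c
  g_smul_left : ∀ (f : C) a b, g (f • a) b = f * g a b
  g_definite : ∀ a, g a a = 0 → a = 0
  D_add : ∀ v f h, D v (f + h) = D v f + D v h
  D_mul : ∀ v f h, D v (f * h) = f * D v h + h * D v f
  D_algebraMap : ∀ v (r : ℝ), D v (algebraMap ℝ C r) = 0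
  D_add_vec : ∀ v w f, D (v + w) f = D v f + D w f
  D_smul_vec : ∀ (f : C) v h, D (f • v) h = f * D v h
  bracket_antisymm : ∀ a b, bracket a b = - bracket b a
  bracket_jacobi : ∀ a b c,
    bracket (bracket a b) c + bracket (bracket b c) a + bracket (bracket c a) b = 0
  bracket_D : ∀ a b f, D (bracket a b) f = D a (D b f) - D b (D a f)
  bracket_leibniz : ∀ a (f : C) b, bracket a (f • b) = D a f • b + f • bracket a b
  lc_add : ∀ z a b, lc z (a + b) = lc z a + lc z b
  lc_smul : ∀ z (f : C) a, lc z (f • a) = D z f • a + f • lc z a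
  lc_add_vec : ∀ z w a, lc (z + w) a = lc z a + lc w a
  lc_smul_vec : ∀ (f : C) z a, lc (f • z) a = f • lc z a
  lc_metric : ∀ z a b, D z (g a b) = g (lc z a) b + g a (lc z b)
  lc_torsion_free : ∀ a b, lc a b - lc b a = bracket a b

/-- A vector field `k` is Killing iff `⟨∇_v k, w⟩ + ⟨∇_w k, v⟩ = 0` for all `v, w`. -/
def VectorFieldCalculus.IsKilling {C X : Type*} [CommRing C] [Algebra ℝ C]
    [AddCommGroup X] [Module C X] (V : VectorFieldCalculus C X) (k : X) : Prop :=
  ∀ v w, V.g (V.lc v k) w + V.g (V.lc w k) v = 0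

/-- Let `∇ = ∇^g + (1/2)T` be a flat metric connection with totally
skew-symmetric torsion `T ∈ Λ³(M)` (`t a b` is the vector with `⟨t a b, c⟩ = T(a,b,c)`).
Then, for an orthonormal frame `e i`,
`Ric^g(a,b) = (1/4) ∑ᵢ ⟨T(a,eᵢ),T(b,eᵢ)⟩`, `Scal^g = (3/2)‖T‖²`, and
`Ric^g(a,a) ≥ 0` with equality iff `a ⌟ T = 0`. -/
theorem ricci_of_flat_skew_torsion {C X : Type*} [CommRing C] [PartialOrder C] [IsOrderedRing C] [Algebra ℝ C]
    [AddCommGroup X] [Module C X] {n : ℕ}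
    (V : VectorFieldCalculus C X)
    (t : X → X → X)
    (hskew1 : ∀ a b c, V.g (t a b) c = - V.g (t b a) c)
    (hskew2 : ∀ a b c, V.g (t a b) c = - V.g (t a c) b)
    -- the flat metric connection ∇ a b = ∇^g a b + (1/2) T(a,b,·)
    (nab : X → X → X)
    (hnab : ∀ a b, nab a b = V.lc a b + algebraMap ℝ C (1/2) • t a b)
    (hflat : ∀ a b c, nab a (nab b c) - nab b (nab a c) - nab (V.bracket a b) c = 0)
    -- a global orthonormal frame
    (e : Fin n → X)
    (horth : ∀ i j, V.g (e i) (e j) = if i = j then 1 else 0)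
    (hspan : ∀ a, a = ∑ i, V.g a (e i) • e i)
    -- squares of functions are nonnegative
    (hsq : ∀ f : C, 0 ≤ f * f)
    -- Riemannian curvature and Ricci tensor of the Levi-Civita connection
    (Rg : X → X → X → X)
    (hRg : ∀ a b c, Rg a b c =
      V.lc a (V.lc b c) - V.lc b (V.lc a c) - V.lc (V.bracket a b) c)
    (Ric : X → X → C)
    (hRic : ∀ a b, Ric a b = ∑ i, V.g (Rg (e i) a b) (e i)) :
    (∀ a b, Ric a b = algebraMap ℝ C (1/4) * ∑ i, V.g (t a (e i)) (t b (e i)))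
    ∧ (∑ i, Ric (e i) (e i)
        = algebraMap ℝ C (3/2)
          * (algebraMap ℝ C (1/6) * ∑ i, ∑ j, ∑ k, (V.g (t (e i) (e j)) (e k))^2))
    ∧ (∀ a, 0 ≤ Ric a a)
    ∧ (∀ a, Ric a a = 0 ↔ ∀ b c, V.g (t a b) c = 0) := by

  -- ===== basic bilinearity lemmas for g =====
  have gsym := V.g_symm
  have gal := V.g_add_left
  have gsl := V.g_smul_left
  have gar : ∀ a b c : X, V.g a (b + c) = V.g a b + V.g a c := fun a b c => by
    rw [gsym, gal, gsym b a, gsym c a]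
  have gsr : ∀ (f : C) (a b : X), V.g a (f • b) = f * V.g a b := fun f a b => by
    rw [gsym, gsl, gsym]
  have gzl : ∀ b : X, V.g 0 b = 0 := fun b => by
    have h0 := gal 0 0 b; rw [add_zero] at h0
    exact (left_eq_add.mp h0)
  have gzr : ∀ b : X, V.g b 0 = 0 := fun b => by rw [gsym]; exact gzl b
  have gnl : ∀ a b : X, V.g (-a) b = - V.g a b := fun a b => by
    have h0 := gal a (-a) b; rw [add_neg_cancel, gzl] at h0
    exact (neg_eq_of_add_eq_zero_right h0.symm).symm
  have gsubl : ∀ a b c : X, V.g (a - b) c = V.g a c - V.g b c := fun a b c => by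
    rw [sub_eq_add_neg, gal, gnl, sub_eq_add_neg]
  have gsubr : ∀ a b c : X, V.g a (b - c) = V.g a b - V.g a c := fun a b c => by
    rw [gsym, gsubl, gsym b a, gsym c a]
  have h1 : algebraMap ℝ C (1/2) + algebraMap ℝ C (1/2) = 1 := by
    rw [← map_add]; norm_num
  have halfc : ∀ u : C, u + u = 0 → u = 0 := fun u hu => by
    linear_combination algebraMap ℝ C (1/2) * hu - u * h1
  have h2 : algebraMap ℝ C (1/2) * algebraMap ℝ C (1/2) = algebraMap ℝ C (1/4) := by
    rw [← map_mul]; norm_num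
  have g_ext : ∀ u v : X, (∀ c, V.g u c = V.g v c) → u = v := by
    intro u v hc
    have hz : V.g (u - v) (u - v) = 0 := by rw [gsubl, hc (u - v), sub_self]
    exact sub_eq_zero.mp (V.g_definite _ hz)
  have Dzero : ∀ v : X, V.D v 0 = 0 := fun v => by
    have h0 := V.D_add v 0 0; rw [add_zero] at h0
    exact (left_eq_add.mp h0)
  -- ===== additivity lemmas for lc =====
  have lc0r : ∀ z : X, V.lc z 0 = 0 := fun z => by
    have h0 := V.lc_add z 0 0; rw [add_zero] at h0
    exact (left_eq_add.mp h0)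
  have lcneg : ∀ z v : X, V.lc z (-v) = - V.lc z v := fun z v => by
    have h0 := V.lc_add z v (-v); rw [add_neg_cancel, lc0r] at h0
    exact (neg_eq_of_add_eq_zero_right h0.symm).symm
  have lcsub : ∀ z u v : X, V.lc z (u - v) = V.lc z u - V.lc z v := fun z u v => by
    rw [sub_eq_add_neg, V.lc_add, lcneg, sub_eq_add_neg]
  have lc0l : ∀ z : X, V.lc 0 z = 0 := fun z => by
    have h0 := V.lc_add_vec 0 0 z; rw [add_zero] at h0
    exact (left_eq_add.mp h0)
  have lcneg1 : ∀ v z : X, V.lc (-v) z = - V.lc v z := fun v z => by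
    have h0 := V.lc_add_vec v (-v) z; rw [add_neg_cancel, lc0l] at h0
    exact (neg_eq_of_add_eq_zero_right h0.symm).symm
  have lcsub1 : ∀ u v z : X, V.lc (u - v) z = V.lc u z - V.lc v z := fun u v z => by
    rw [sub_eq_add_neg, V.lc_add_vec, lcneg1, sub_eq_add_neg]
  have lcconst : ∀ (z : X) (r : ℝ) (v : X),
      V.lc z (algebraMap ℝ C r • v) = algebraMap ℝ C r • V.lc z v := fun z r v => by
    rw [V.lc_smul, V.D_algebraMap, zero_smul, zero_add]
  -- ===== torsion 3-form lemmas =====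
  have tcyc : ∀ x y z : X, V.g (t x y) z = V.g (t z x) y := fun x y z => by
    rw [hskew2 x y z, hskew1 x z y, neg_neg]
  have tdiag1 : ∀ x y : X, V.g (t x x) y = 0 := fun x y =>
    halfc _ (by linear_combination hskew1 x x y)
  have tdiag13 : ∀ x y : X, V.g (t x y) x = 0 := fun x y => by
    rw [tcyc]; exact tdiag1 x y
  have tmove : ∀ u b z : X, V.g (t u b) z = - V.g (t z b) u := fun u b z => by
    rw [tcyc u b z, hskew2 z u b]
  have tanti : ∀ a b : X, t b a = - t a b := fun a b =>
    g_ext _ _ (fun c => by rw [gnl]; exact hskew1 b a c)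
  have t1sub : ∀ u v b z : X, V.g (t (u - v) b) z = V.g (t u b) z - V.g (t v b) z := by
    intro u v b z
    rw [tmove (u - v) b z, gsubr, tmove u b z, tmove v b z]; ring
  -- ===== curvature lemmas =====
  have hbr : ∀ x y : X, V.bracket x y = V.lc x y - V.lc y x := fun x y =>
    (V.lc_torsion_free x y).symm
  have L4a : ∀ a b c : X, V.g (Rg a b c) c = 0 := by
    intro a b c
    have m1 := V.lc_metric a (V.lc b c) c
    have m2 := V.lc_metric b (V.lc a c) c
    have e4 : V.D b (V.g c c) = V.g (V.lc b c) c + V.g (V.lc b c) c := by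
      rw [V.lc_metric b c c, gsym c (V.lc b c)]
    have e3 : V.D a (V.g c c) = V.g (V.lc a c) c + V.g (V.lc a c) c := by
      rw [V.lc_metric a c c, gsym c (V.lc a c)]
    have e4' : V.D a (V.D b (V.g c c))
        = V.D a (V.g (V.lc b c) c) + V.D a (V.g (V.lc b c) c) := by
      rw [e4, V.D_add]
    have e3' : V.D b (V.D a (V.g c c))
        = V.D b (V.g (V.lc a c) c) + V.D b (V.g (V.lc a c) c) := by
      rw [e3, V.D_add]
    have m5' : V.D (V.bracket a b) (V.g c c)
        = V.g (V.lc (V.bracket a b) c) c + V.g (V.lc (V.bracket a b) c) c := by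
      rw [V.lc_metric (V.bracket a b) c c, gsym c (V.lc (V.bracket a b) c)]
    have m6 := V.bracket_D a b (V.g c c)
    have msym : V.g (V.lc b c) (V.lc a c) = V.g (V.lc a c) (V.lc b c) := gsym _ _
    rw [hRg, gsubl, gsubl]
    refine halfc _ ?_
    linear_combination (-2 : C) * m1 + 2 * m2 + e3' - e4' + m5' - m6 - 2 * msym
  have PB : ∀ a b c d : X,
      V.g (Rg a b c) d + V.g (Rg b c a) d + V.g (Rg c a b) d = 0 := by
    intro a b c d
    have hjac := V.bracket_jacobi a b c
    have hj := congrArg (fun v => V.g v d) hjac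
    simp only [hbr, lcsub1, lcsub, gal, gsubl, gzl] at hj
    simp only [hRg, hbr, lcsub1, gsubl]
    linear_combination -hj
  have PA1 : ∀ a b c d : X, V.g (Rg b a c) d = - V.g (Rg a b c) d := by
    intro a b c d
    rw [hRg, hRg, V.bracket_antisymm b a, lcneg1]
    simp only [gsubl, gnl]; ring
  have symz : ∀ z a b : X, V.g (Rg z a b) z = V.g (Rg z b a) z := by
    intro z a b
    linear_combination PB z a b z - L4a a b z - PA1 z b a z
  -- ===== expansion of the flat connection =====
  have expand2 : ∀ u w z : X, V.g (nab u w) z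
      = V.g (V.lc u w) z + algebraMap ℝ C (1/2) * V.g (t u w) z := by
    intro u w z; rw [hnab, gal, gsl]
  have expand : ∀ x y w z : X, V.g (nab x (nab y w)) z
      = V.g (V.lc x (V.lc y w)) z + algebraMap ℝ C (1/2) * V.g (V.lc x (t y w)) z
        + algebraMap ℝ C (1/2) * V.g (t x (V.lc y w)) z
        + algebraMap ℝ C (1/2) * (algebraMap ℝ C (1/2) * V.g (t x (t y w)) z) := by
    intro x y w z
    rw [hnab y w, hnab x]
    have hA : V.g (t x (V.lc y w + algebraMap ℝ C (1/2) • t y w)) z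
        = V.g (t x (V.lc y w)) z + algebraMap ℝ C (1/2) * V.g (t x (t y w)) z := by
      rw [hskew2 x _ z, gar, gsr, hskew2 x (V.lc y w) z, hskew2 x (t y w) z]; ring
    rw [gal, gsl, hA, V.lc_add, lcconst, gal, gsl]; ring
  have Ez : ∀ z a b : X,
      (V.g (V.lc z (V.lc a b)) z + algebraMap ℝ C (1/2) * V.g (V.lc z (t a b)) z
        + algebraMap ℝ C (1/2) * V.g (t z (V.lc a b)) z
        + algebraMap ℝ C (1/2) * (algebraMap ℝ C (1/2) * V.g (t z (t a b)) z))
      - (V.g (V.lc a (V.lc z b)) z + algebraMap ℝ C (1/2) * V.g (V.lc a (t z b)) z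
        + algebraMap ℝ C (1/2) * V.g (t a (V.lc z b)) z
        + algebraMap ℝ C (1/2) * (algebraMap ℝ C (1/2) * V.g (t a (t z b)) z))
      - (V.g (V.lc (V.bracket z a) b) z
        + algebraMap ℝ C (1/2) * V.g (t (V.bracket z a) b) z) = 0 := by
    intro z a b
    have hj := congrArg (fun v => V.g v z) (hflat z a b)
    simp only [gsubl, gzl] at hj
    rw [expand z a b z, expand a z b z, expand2 (V.bracket z a) b z] at hj
    linear_combination hj
  -- ===== the key pointwise identity =====
  have key : ∀ z a b : X,
      V.g (Rg z a b) z = algebraMap ℝ C (1/4) * V.g (t a z) (t b z) := by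
    intro z a b
    have E1 := Ez z a b
    have E2 := Ez z b a
    have rf1 : V.g (Rg z a b) z = V.g (V.lc z (V.lc a b)) z - V.g (V.lc a (V.lc z b)) z
        - V.g (V.lc (V.bracket z a) b) z := by rw [hRg, gsubl, gsubl]
    have rf2 : V.g (Rg z b a) z = V.g (V.lc z (V.lc b a)) z - V.g (V.lc b (V.lc z a)) z
        - V.g (V.lc (V.bracket z b) a) z := by rw [hRg, gsubl, gsubl]
    have sym := symz z a b
    have c1 : V.g (t z (t a b)) z = 0 := tdiag13 _ _
    have c1' : V.g (t z (t b a)) z = 0 := tdiag13 _ _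
    have c2 : V.g (t a (t z b)) z = V.g (t a z) (t b z) := by
      rw [hskew2 a (t z b) z]
      have hq : V.g (t a z) (t z b) = - V.g (t a z) (t b z) := by
        rw [gsym (t a z) (t z b), hskew1 z b (t a z), gsym (t b z) (t a z)]
      rw [hq, neg_neg]
    have c2' : V.g (t b (t z a)) z = V.g (t b z) (t a z) := by
      rw [hskew2 b (t z a) z]
      have hq : V.g (t b z) (t z a) = - V.g (t b z) (t a z) := by
        rw [gsym (t b z) (t z a), hskew1 z a (t b z), gsym (t a z) (t b z)]
      rw [hq, neg_neg]
    have wsym : V.g (t b z) (t a z) = V.g (t a z) (t b z) := gsym _ _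
    have c3 : V.g (t z (V.lc a b)) z = 0 := tdiag13 _ _
    have c3' : V.g (t z (V.lc b a)) z = 0 := tdiag13 _ _
    have c4 : V.g (V.lc z (t b a)) z = - V.g (V.lc z (t a b)) z := by
      rw [tanti a b, lcneg, gnl]
    have c5 : V.g (V.lc a (t z b)) z = - V.g (t z b) (V.lc a z) := by
      have hm := V.lc_metric a (t z b) z
      rw [tdiag13 z b, Dzero] at hm
      linear_combination -hm
    have c5' : V.g (V.lc b (t z a)) z = - V.g (t z a) (V.lc b z) := by
      have hm := V.lc_metric b (t z a) z
      rw [tdiag13 z a, Dzero] at hm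
      linear_combination -hm
    have c7 : V.g (t (V.bracket z a) b) z
        = V.g (t (V.lc z a) b) z - V.g (t (V.lc a z) b) z := by rw [hbr, t1sub]
    have c7' : V.g (t (V.bracket z b) a) z
        = V.g (t (V.lc z b) a) z - V.g (t (V.lc b z) a) z := by rw [hbr, t1sub]
    have r1 : V.g (t (V.lc a z) b) z = - V.g (t z b) (V.lc a z) := tmove _ _ _
    have r1' : V.g (t (V.lc b z) a) z = - V.g (t z a) (V.lc b z) := tmove _ _ _
    have r3 : V.g (t (V.lc z b) a) z = - V.g (t a (V.lc z b)) z := hskew1 _ _ _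
    have r4 : V.g (t (V.lc z a) b) z = - V.g (t b (V.lc z a)) z := hskew1 _ _ _
    have E1' : V.g (Rg z a b) z + algebraMap ℝ C (1/2) * (V.g (V.lc z (t a b)) z
          - V.g (t a (V.lc z b)) z + V.g (t b (V.lc z a)) z)
        = algebraMap ℝ C (1/2) * (algebraMap ℝ C (1/2) * V.g (t a z) (t b z)) := by
      linear_combination E1 + rf1 - algebraMap ℝ C (1/2) * c3
        - algebraMap ℝ C (1/2) * algebraMap ℝ C (1/2) * c1
        + algebraMap ℝ C (1/2) * algebraMap ℝ C (1/2) * c2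
        + algebraMap ℝ C (1/2) * c5 + algebraMap ℝ C (1/2) * c7
        - algebraMap ℝ C (1/2) * r1 + algebraMap ℝ C (1/2) * r4
    have E2' : V.g (Rg z b a) z + algebraMap ℝ C (1/2) * (V.g (V.lc z (t b a)) z
          - V.g (t b (V.lc z a)) z + V.g (t a (V.lc z b)) z)
        = algebraMap ℝ C (1/2) * (algebraMap ℝ C (1/2) * V.g (t b z) (t a z)) := by
      linear_combination E2 + rf2 - algebraMap ℝ C (1/2) * c3'
        - algebraMap ℝ C (1/2) * algebraMap ℝ C (1/2) * c1'
        + algebraMap ℝ C (1/2) * algebraMap ℝ C (1/2) * c2'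
        + algebraMap ℝ C (1/2) * c5' + algebraMap ℝ C (1/2) * c7'
        - algebraMap ℝ C (1/2) * r1' + algebraMap ℝ C (1/2) * r3
    have big : V.g (Rg z a b) z + V.g (Rg z a b) z
        = algebraMap ℝ C (1/4) * V.g (t a z) (t b z)
          + algebraMap ℝ C (1/4) * V.g (t a z) (t b z) := by
      linear_combination E1' + E2' + sym - algebraMap ℝ C (1/2) * c4
        + algebraMap ℝ C (1/2) * algebraMap ℝ C (1/2) * wsym
        + (2 * V.g (t a z) (t b z)) * h2
    have hz := halfc (V.g (Rg z a b) z - algebraMap ℝ C (1/4) * V.g (t a z) (t b z))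
      (by linear_combination big)
    exact sub_eq_zero.mp hz
  -- ===== claim 1 =====
  have claim1 : ∀ a b : X, Ric a b
      = algebraMap ℝ C (1/4) * ∑ i, V.g (t a (e i)) (t b (e i)) := by
    intro a b
    rw [hRic, Finset.mul_sum]
    exact Finset.sum_congr rfl fun i _ => key (e i) a b
  -- ===== frame expansion lemmas =====
  have gsum : ∀ (v : X) (f : Fin n → X) (s : Finset (Fin n)),
      V.g v (∑ i ∈ s, f i) = ∑ i ∈ s, V.g v (f i) := by
    intro v f s
    induction s using Finset.induction_on with
    | empty => simpa using gzr v
    | insert _ _ hni ih =>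
      rw [Finset.sum_insert hni, Finset.sum_insert hni, gar, ih]
  have gnorm : ∀ v w : X, V.g v w = ∑ k, V.g v (e k) * V.g w (e k) := by
    intro v w
    conv_lhs => rw [hspan w]
    rw [gsum v _ Finset.univ]
    exact Finset.sum_congr rfl fun k _ => by rw [gsr, mul_comm]
  -- ===== claim 2 =====
  have claim2 : ∑ i, Ric (e i) (e i) = algebraMap ℝ C (3/2)
      * (algebraMap ℝ C (1/6) * ∑ i, ∑ j, ∑ k, (V.g (t (e i) (e j)) (e k))^2) := by
    have hc : algebraMap ℝ C (3/2) * algebraMap ℝ C (1/6) = algebraMap ℝ C (1/4) := by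
      rw [← map_mul]; norm_num
    rw [← mul_assoc, hc, Finset.mul_sum]
    refine Finset.sum_congr rfl fun i _ => ?_
    rw [claim1 (e i) (e i)]
    congr 1
    refine Finset.sum_congr rfl fun j _ => ?_
    rw [gnorm]
    exact Finset.sum_congr rfl fun k _ => (pow_two _).symm
  -- ===== claim 3 =====
  have RicEq : ∀ a : X, Ric a a = ∑ i, ∑ k,
      (algebraMap ℝ C (1/2) * V.g (t a (e i)) (e k))
        * (algebraMap ℝ C (1/2) * V.g (t a (e i)) (e k)) := by
    intro a
    rw [claim1 a a, Finset.mul_sum]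
    refine Finset.sum_congr rfl fun i _ => ?_
    rw [gnorm, Finset.mul_sum]
    refine Finset.sum_congr rfl fun k _ => ?_
    linear_combination (-(V.g (t a (e i)) (e k) * V.g (t a (e i)) (e k))) * h2
  have claim3 : ∀ a : X, 0 ≤ Ric a a := fun a => by
    rw [RicEq a]
    exact Finset.sum_nonneg fun i _ => Finset.sum_nonneg fun k _ => hsq _
  -- ===== claim 4 =====
  have claim4 : ∀ a : X, Ric a a = 0 ↔ ∀ b c, V.g (t a b) c = 0 := by
    intro a
    constructor
    · intro h0
      rw [RicEq a] at h0
      have hterm : ∀ i, ∑ k, (algebraMap ℝ C (1/2) * V.g (t a (e i)) (e k))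
          * (algebraMap ℝ C (1/2) * V.g (t a (e i)) (e k)) = 0 := fun i =>
        (Finset.sum_eq_zero_iff_of_nonneg
          (fun i _ => Finset.sum_nonneg fun k _ => hsq _)).mp h0 i (Finset.mem_univ i)
      have hterm2 : ∀ i k, (algebraMap ℝ C (1/2) * V.g (t a (e i)) (e k))
          * (algebraMap ℝ C (1/2) * V.g (t a (e i)) (e k)) = 0 := fun i k =>
        (Finset.sum_eq_zero_iff_of_nonneg (fun k _ => hsq _)).mp (hterm i) k
          (Finset.mem_univ k)
      have h4 : algebraMap ℝ C 4 * algebraMap ℝ C (1/4) = 1 := by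
        rw [← map_mul]; norm_num
      have hx2 : ∀ i k, V.g (t a (e i)) (e k) * V.g (t a (e i)) (e k) = 0 := by
        intro i k
        linear_combination (algebraMap ℝ C 4) * hterm2 i k
          - (algebraMap ℝ C 4 * V.g (t a (e i)) (e k) * V.g (t a (e i)) (e k)) * h2
          - (V.g (t a (e i)) (e k) * V.g (t a (e i)) (e k)) * h4
      have tzero : ∀ i, t a (e i) = 0 := by
        intro i
        apply V.g_definite
        rw [gnorm]
        exact Finset.sum_eq_zero fun k _ => hx2 i k
      intro b c
      rw [hskew2 a b c]
      have hb0 : V.g (t a c) b = 0 := by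
        conv_lhs => rw [hspan b]
        rw [gsum]
        refine Finset.sum_eq_zero fun i _ => ?_
        rw [gsr]
        have he : V.g (t a c) (e i) = 0 := by
          rw [hskew2 a c (e i), tzero i, gzl, neg_zero]
        rw [he, mul_zero]
      rw [hb0, neg_zero]
    · intro h0
      rw [claim1 a a, Finset.sum_eq_zero fun i _ => h0 (e i) (t a (e i)), mul_zero]
  exact ⟨claim1, claim2, claim3, claim4⟩
end

section
/- Let ∇ be a flat metric connection with totally skew-symmetric torsion T on a Riemannian manifold. Then the Riemannian curvature tensor is given by R^g(X,Y,Z,V) = −(1/6)⟨T(X,Y),T(Z,V)⟩ + (1/12)⟨T(Y,Z),T(X,V)⟩ + (1/12)⟨T(Z,X),T(Y,V)⟩. -/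
namespace VectorFieldCalculus

variable {C X : Type*} [CommRing C] [Algebra ℝ C]
    [AddCommGroup X] [Module C X] (V : VectorFieldCalculus C X)

lemma g_zero_left (c : X) : V.g 0 c = 0 := by
  have h := V.g_add_left 0 0 c
  rw [add_zero] at h
  exact (right_eq_add.mp h)

lemma g_neg_left (a c : X) : V.g (-a) c = - V.g a c := by
  rw [show -a = (-1 : C) • a from (neg_one_smul C a).symm, V.g_smul_left]; ring

lemma g_sub_left (a b c : X) : V.g (a - b) c = V.g a c - V.g b c := by
  rw [sub_eq_add_neg, V.g_add_left, V.g_neg_left, sub_eq_add_neg]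

lemma g_add_right (a b c : X) : V.g a (b + c) = V.g a b + V.g a c := by
  rw [V.g_symm, V.g_add_left, V.g_symm b, V.g_symm c]

lemma g_smul_right (f : C) (a b : X) : V.g a (f • b) = f * V.g a b := by
  rw [V.g_symm, V.g_smul_left, V.g_symm]

lemma g_sub_right (a b c : X) : V.g a (b - c) = V.g a b - V.g a c := by
  rw [V.g_symm, V.g_sub_left, V.g_symm b, V.g_symm c]

lemma D_zero (v : X) : V.D v 0 = 0 := by
  have := V.D_algebraMap v 0
  rwa [map_zero] at this

lemma D_neg (v : X) (f : C) : V.D v (-f) = - V.D v f := by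
  have h := V.D_add v f (-f)
  rw [add_neg_cancel, V.D_zero] at h
  linear_combination -h

lemma lc_sub (z : X) (a b : X) : V.lc z (a - b) = V.lc z a - V.lc z b := by
  have h0 : V.lc z 0 = 0 := by
    have h := V.lc_add z 0 0
    rw [add_zero] at h
    exact (right_eq_add.mp h)
  have hneg : V.lc z (-b) = - V.lc z b := by
    have h := V.lc_add z b (-b)
    rw [add_neg_cancel, h0] at h
    exact (neg_eq_of_add_eq_zero_right h.symm).symm
  rw [sub_eq_add_neg, V.lc_add, hneg, sub_eq_add_neg]

lemma lc_sub_vec (z w a : X) : V.lc (z - w) a = V.lc z a - V.lc w a := by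
  have hneg : V.lc (-w) a = - V.lc w a := by
    rw [show -w = (-1 : C) • w from (neg_one_smul C w).symm, V.lc_smul_vec]
    exact neg_one_smul C (V.lc w a)
  rw [sub_eq_add_neg, V.lc_add_vec, hneg, sub_eq_add_neg]

lemma lc_neg_vec (z a : X) : V.lc (-z) a = - V.lc z a := by
  rw [show -z = (-1 : C) • z from (neg_one_smul C z).symm, V.lc_smul_vec]
  exact neg_one_smul C (V.lc z a)

/-- `⟨∇_z x, w⟩ = D_z ⟨x,w⟩ - ⟨x, ∇_z w⟩`. -/
lemma g_lc (z x w : X) : V.g (V.lc z x) w = V.D z (V.g x w) - V.g x (V.lc z w) := by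
  have h := V.lc_metric z x w
  linear_combination -h

/-- Cancel an invertible real scalar in `C`. -/
lemma cancel_algebraMap {r : ℝ} (hr : r ≠ 0) {x y : C}
    (h : algebraMap ℝ C r * x = algebraMap ℝ C r * y) : x = y := by
  have h2 := congrArg (fun z => algebraMap ℝ C r⁻¹ * z) h
  simpa [← mul_assoc, ← map_mul, inv_mul_cancel₀ hr] using h2

section Torsion

variable (t : X → X → X)

/-- `(∇^g_a T)(b,c,d)` written so that the derivated slot sits in the second argument of `g`. -/
def Gg (a b c d : X) : C :=
  V.D a (V.g (t b c) d) - V.g (t c d) (V.lc a b) - V.g (t d b) (V.lc a c)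
    - V.g (t b c) (V.lc a d)

variable (hskew1 : ∀ a b c, V.g (t a b) c = - V.g (t b a) c)
    (hskew2 : ∀ a b c, V.g (t a b) c = - V.g (t a c) b)

include hskew1 hskew2 in
lemma tcyc (a b c : X) : V.g (t a b) c = V.g (t b c) a := by
  rw [hskew1, hskew2, neg_neg]

include hskew1 hskew2 in
lemma Gg23 (a b c d : X) : V.Gg t a b c d = - V.Gg t a c b d := by
  unfold Gg
  rw [show V.g (t c b) d = -(V.g (t b c) d) from hskew1 c b d, V.D_neg]
  linear_combination -(hskew1 c d (V.lc a b)) - (hskew1 d b (V.lc a c)) - (hskew1 b c (V.lc a d))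

include hskew1 hskew2 in
lemma Gg34 (a b c d : X) : V.Gg t a b c d = - V.Gg t a b d c := by
  unfold Gg
  rw [show V.g (t b d) c = -(V.g (t b c) d) from hskew2 b d c, V.D_neg]
  linear_combination -(hskew1 c d (V.lc a b)) - (hskew1 d b (V.lc a c)) - (hskew1 b c (V.lc a d))

section Flat

variable (nab : X → X → X)
    (hnab : ∀ a b, nab a b = V.lc a b + algebraMap ℝ C (1/2) • t a b)
    (hflat : ∀ a b c, nab a (nab b c) - nab b (nab a c) - nab (V.bracket a b) c = 0)
    (Rg : X → X → X → X)
    (hRg : ∀ a b c, Rg a b c =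
      V.lc a (V.lc b c) - V.lc b (V.lc a c) - V.lc (V.bracket a b) c)

include hskew1 hskew2 hnab hflat hRg in
lemma keyE (a b c d : X) :
    V.g (Rg a b c) d
      = -(algebraMap ℝ C (1/2) * (V.Gg t a b c d - V.Gg t b a c d))
        + algebraMap ℝ C (1/2) * (algebraMap ℝ C (1/2)
            * (V.g (t a d) (t b c) - V.g (t b d) (t a c))) := by
  have key : ∀ x y : X, V.g (nab x (nab y c)) d
      = V.g (V.lc x (V.lc y c)) d
        + algebraMap ℝ C (1/2) * (V.D x (V.g (t y c) d) - V.g (t y c) (V.lc x d))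
        - algebraMap ℝ C (1/2) * V.g (t x d) (V.lc y c)
        - algebraMap ℝ C (1/2) * (algebraMap ℝ C (1/2) * V.g (t x d) (t y c)) := by
    intro x y
    rw [hnab y c, hnab x]
    rw [V.lc_add, V.lc_smul, V.D_algebraMap, zero_smul, zero_add]
    rw [V.g_add_left, V.g_add_left, V.g_smul_left, V.g_smul_left]
    rw [hskew2 x (V.lc y c + algebraMap ℝ C (1/2) • t y c) d]
    rw [V.g_add_right, V.g_smul_right]
    rw [V.g_lc x (t y c) d]
    ring
  have keyB : V.g (nab (V.bracket a b) c) d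
      = V.g (V.lc (V.bracket a b) c) d
        + algebraMap ℝ C (1/2) * (V.g (t c d) (V.lc a b) - V.g (t c d) (V.lc b a)) := by
    rw [hnab, V.g_add_left, V.g_smul_left]
    rw [tcyc V t hskew1 hskew2 (V.bracket a b) c d]
    rw [← V.lc_torsion_free a b, V.g_sub_right]
  have flat0 : V.g (nab a (nab b c)) d - V.g (nab b (nab a c)) d
      - V.g (nab (V.bracket a b) c) d = 0 := by
    have h0 := congrArg (fun x => V.g x d) (hflat a b c)
    simpa [V.g_sub_left, V.g_zero_left] using h0
  have hRgd : V.g (Rg a b c) d = V.g (V.lc a (V.lc b c)) d - V.g (V.lc b (V.lc a c)) d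
      - V.g (V.lc (V.bracket a b) c) d := by
    rw [hRg, V.g_sub_left, V.g_sub_left]
  simp only [Gg]
  linear_combination hRgd - (key a b) + (key b a) + keyB + flat0
    + algebraMap ℝ C (1/2) * (hskew1 a d (V.lc b c))
    - algebraMap ℝ C (1/2) * (hskew1 b d (V.lc a c))

end Flat

end Torsion

section Curv

variable (Rg : X → X → X → X)
    (hRg : ∀ a b c, Rg a b c =
      V.lc a (V.lc b c) - V.lc b (V.lc a c) - V.lc (V.bracket a b) c)

include hRg in
lemma Fab (a b c d : X) : V.g (Rg a b c) d + V.g (Rg b a c) d = 0 := by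
  have h : Rg b a c = - Rg a b c := by
    rw [hRg, hRg, V.bracket_antisymm b a, V.lc_neg_vec]; abel
  rw [h, V.g_neg_left]; ring

include hRg in
lemma Fsq (a b c : X) : V.g (Rg a b c) c = 0 := by
  have h2 : V.D a (2:C) = 0 ∧ V.D b (2:C) = 0 := by
    constructor <;> · rw [← map_ofNat (algebraMap ℝ C) 2]; exact V.D_algebraMap _ 2
  apply cancel_algebraMap (show (2:ℝ) ≠ 0 by norm_num) (y := 0)
  rw [mul_zero, map_ofNat]
  have hs : V.g (Rg a b c) c = V.g (V.lc a (V.lc b c)) c - V.g (V.lc b (V.lc a c)) c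
      - V.g (V.lc (V.bracket a b) c) c := by rw [hRg, V.g_sub_left, V.g_sub_left]
  have m1 := V.g_lc a (V.lc b c) c
  have m2 := V.g_lc b (V.lc a c) c
  have n : ∀ z, (2:C) * V.g (V.lc z c) c = V.D z (V.g c c) := by
    intro z
    have h := V.lc_metric z c c
    rw [V.g_symm c (V.lc z c)] at h
    linear_combination -h
  have dd : ∀ x y : X, V.D x (2:C) = 0 → V.D x (V.D y (V.g c c)) = (2:C) * V.D x (V.g (V.lc y c) c) := by
    intro x y hx
    rw [← n y, V.D_mul, hx]
    ring
  have hbD := V.bracket_D a b (V.g c c)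
  have gsym := V.g_symm (V.lc b c) (V.lc a c)
  linear_combination (2:C) * hs + (2:C) * m1 - (2:C) * m2 - n (V.bracket a b) - hbD
    - dd a b h2.1 + dd b a h2.2 - (2:C) * gsym

include hRg in
lemma Fcd (a b c d : X) : V.g (Rg a b c) d + V.g (Rg a b d) c = 0 := by
  have hadd : Rg a b (c + d) = Rg a b c + Rg a b d := by
    rw [hRg a b (c + d), hRg a b c, hRg a b d]
    simp only [V.lc_add]
    abel
  have h0 := V.Fsq Rg hRg a b (c + d)
  rw [hadd, V.g_add_left, V.g_add_right, V.g_add_right] at h0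
  linear_combination h0 - V.Fsq Rg hRg a b c - V.Fsq Rg hRg a b d

include hRg in
lemma FB (a b c d : X) :
    V.g (Rg a b c) d + V.g (Rg b c a) d + V.g (Rg c a b) d = 0 := by
  have e : ∀ x y z : X, V.g (V.lc x (V.bracket y z)) d
      = V.g (V.lc x (V.lc y z)) d - V.g (V.lc x (V.lc z y)) d := by
    intro x y z
    rw [← V.lc_torsion_free y z, V.lc_sub, V.g_sub_left]
  have f : ∀ x y z : X, V.g (V.lc x (V.bracket y z)) d - V.g (V.lc (V.bracket y z) x) d
      = V.g (V.bracket x (V.bracket y z)) d := by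
    intro x y z
    have h := congrArg (fun w => V.g w d) (V.lc_torsion_free x (V.bracket y z))
    simpa [V.g_sub_left] using h
  have j : V.g (V.bracket (V.bracket a b) c) d + V.g (V.bracket (V.bracket b c) a) d
      + V.g (V.bracket (V.bracket c a) b) d = 0 := by
    have h := congrArg (fun w => V.g w d) (V.bracket_jacobi a b c)
    simpa [V.g_add_left, V.g_zero_left] using h
  have anti : ∀ x y z : X, V.g (V.bracket x (V.bracket y z)) d
      = - V.g (V.bracket (V.bracket y z) x) d := by
    intro x y z
    rw [V.bracket_antisymm x (V.bracket y z), V.g_neg_left]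
  have hs : ∀ x y z : X, V.g (Rg x y z) d = V.g (V.lc x (V.lc y z)) d
      - V.g (V.lc y (V.lc x z)) d - V.g (V.lc (V.bracket x y) z) d := by
    intro x y z
    rw [hRg, V.g_sub_left, V.g_sub_left]
  linear_combination hs a b c + hs b c a + hs c a b
    - e c a b - e a b c - e b c a
    + f c a b + f a b c + f b c a
    + anti c a b + anti a b c + anti b c a - j

include hRg in
lemma Fpair (a b c d : X) : V.g (Rg a b c) d = V.g (Rg c d a) b := by
  apply cancel_algebraMap (show (2:ℝ) ≠ 0 by norm_num)
  rw [map_ofNat]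
  linear_combination V.FB Rg hRg a b c d + V.Fcd Rg hRg a b c d
    - V.FB Rg hRg a b d c - V.Fab Rg hRg a c b d + V.Fcd Rg hRg a c b d
    - V.FB Rg hRg a c d b + V.Fab Rg hRg a d b c - V.Fcd Rg hRg a d b c
    + V.Fab Rg hRg a d c b - V.Fcd Rg hRg b c a d + V.FB Rg hRg b c d a
    + V.Fcd Rg hRg b d a c - V.Fab Rg hRg b d c a - V.Fcd Rg hRg c d a b

end Curv

end VectorFieldCalculus

/-- For a flat metric connection `∇ = ∇^g + (1/2)T` with skew torsion,
the Riemannian curvature tensor is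
`R^g(a,b,c,d) = -(1/6)⟨T(a,b),T(c,d)⟩ + (1/12)⟨T(b,c),T(a,d)⟩ + (1/12)⟨T(c,a),T(b,d)⟩`. -/
theorem curvature_of_flat_skew_torsion {C X : Type*} [CommRing C] [Algebra ℝ C]
    [AddCommGroup X] [Module C X]
    (V : VectorFieldCalculus C X)
    (t : X → X → X)
    (hskew1 : ∀ a b c, V.g (t a b) c = - V.g (t b a) c)
    (hskew2 : ∀ a b c, V.g (t a b) c = - V.g (t a c) b)
    (nab : X → X → X)
    (hnab : ∀ a b, nab a b = V.lc a b + algebraMap ℝ C (1/2) • t a b)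
    (hflat : ∀ a b c, nab a (nab b c) - nab b (nab a c) - nab (V.bracket a b) c = 0)
    (Rg : X → X → X → X)
    (hRg : ∀ a b c, Rg a b c =
      V.lc a (V.lc b c) - V.lc b (V.lc a c) - V.lc (V.bracket a b) c)
    (a b c d : X) :
    V.g (Rg a b c) d
      = algebraMap ℝ C (-(1/6)) * V.g (t a b) (t c d)
        + algebraMap ℝ C (1/12) * V.g (t b c) (t a d)
        + algebraMap ℝ C (1/12) * V.g (t c a) (t b d) := by
  have hr2 : (2:C) * algebraMap ℝ C (1/2) = 1 := by
    rw [show ((2:C)) = algebraMap ℝ C 2 from (map_ofNat _ _).symm, ← map_mul,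
      show (2:ℝ) * (1/2) = 1 by norm_num, map_one]
  have E4 : ∀ p q s e : X, (4:C) * V.g (Rg p q s) e
      = (-2:C) * (V.Gg t p q s e - V.Gg t q p s e)
        + (V.g (t p e) (t q s) - V.g (t q e) (t p s)) := by
    intro p q s e
    have h := V.keyE t hskew1 hskew2 nab hnab hflat Rg hRg p q s e
    linear_combination (4:C) * h + ((-2:C) * (V.Gg t p q s e - V.Gg t q p s e)
      + ((2:C) * algebraMap ℝ C (1/2) + 1)
        * (V.g (t p e) (t q s) - V.g (t q e) (t p s))) * hr2
  have G23i : ∀ x y z w : X, V.Gg t x y z w + V.Gg t x z y w = 0 := by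
    intro x y z w
    linear_combination V.Gg23 t hskew1 hskew2 x y z w
  have G34i : ∀ x y z w : X, V.Gg t x y z w + V.Gg t x y w z = 0 := by
    intro x y z w
    linear_combination V.Gg34 t hskew1 hskew2 x y z w
  have FBi := V.FB Rg hRg
  have Fabi := V.Fab Rg hRg
  have Fcdi := V.Fcd Rg hRg
  have Fpairi := V.Fpair Rg hRg
  have Psymi : ∀ x y z w : X, V.g (t x y) (t z w) = V.g (t z w) (t x y) :=
    fun x y z w => V.g_symm _ _
  have P12i : ∀ x y z w : X, V.g (t x y) (t z w) = - V.g (t y x) (t z w) :=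
    fun x y z w => hskew1 x y _
  have P34i : ∀ x y z w : X, V.g (t x y) (t z w) = - V.g (t x y) (t w z) := by
    intro x y z w
    linear_combination V.g_symm (t x y) (t z w) + hskew1 z w (t x y)
      + V.g_symm (t x y) (t w z)
  have c1 : (24:C) * algebraMap ℝ C (-(1/6)) = -4 := by
    rw [show ((24:C)) = algebraMap ℝ C 24 from (map_ofNat _ _).symm, ← map_mul,
      show (24:ℝ) * -(1/6) = -4 by norm_num, map_neg, map_ofNat]
  have c2 : (24:C) * algebraMap ℝ C (1/12) = 2 := by
    rw [show ((24:C)) = algebraMap ℝ C 24 from (map_ofNat _ _).symm, ← map_mul,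
      show (24:ℝ) * (1/12) = 2 by norm_num, map_ofNat]
  apply VectorFieldCalculus.cancel_algebraMap (show (24:ℝ) ≠ 0 by norm_num)
  rw [map_ofNat]
  linear_combination E4 a b c d 
    - (6:C) * (G23i a b c d) 
    + (4:C) * (G34i a b c d) 
    + (4:C) * (FBi a b c d) 
    + (8:C) * (Fcdi a b c d) 
    + (8:C) * (Fpairi a b c d) 
    - Psymi a b c d 
    + P12i a b c d 
    + (2:C) * (P34i a b c d) 
    - E4 a b d c 
    - (2:C) * (G23i a b d c) 
    - (4:C) * (Fabi a b d c) 
    + Psymi a b d c 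
    - P12i a b d c 
    - E4 a c b d 
    + (8:C) * (G34i a c b d) 
    - (4:C) * (Fabi a c b d) 
    + (4:C) * (Fcdi a c b d) 
    + (4:C) * (Fpairi a c b d) 
    + (2:C) * (Psymi a c b d) 
    - (2:C) * (P12i a c b d) 
    - P34i a c b d 
    - (2:C) * (E4 a c d b) 
    - (4:C) * (G23i a c d b) 
    + (4:C) * (Fpairi a c d b) 
    + (2:C) * (Psymi a c d b) 
    + E4 a d b c 
    + (4:C) * (FBi a d b c) 
    - (8:C) * (Fcdi a d b c) 
    + P34i a d b c 
    + (2:C) * (E4 a d c b) 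
    - (2:C) * (Psymi a d c b) 
    + (2:C) * (G23i b a c d) 
    - Psymi b a c d 
    - (2:C) * (G23i b a d c) 
    + Psymi b a d c 
    - E4 b c a d 
    - P34i b c a d 
    + (2:C) * (P12i b c d a) 
    + E4 b d a c 
    + P34i b d a c 
    - (2:C) * (P12i b d c a) 
    - (2:C) * (G23i c a b d) 
    - (4:C) * (G23i c a d b) 
    + (2:C) * (E4 c d a b) 
    + (2:C) * (G23i d a b c) 
    + (4:C) * (G23i d a c b)
    - V.g (t a b) (t c d) * c1 - V.g (t b c) (t a d) * c2 - V.g (t c a) (t b d) * c2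
end

section
/- Let e_1,...,e_n be a global ∇-parallel orthonormal frame for a flat metric connection ∇ with skew-symmetric torsion T on a Riemannian manifold. Then each e_i is a Killing vector field, ∇^g_{e_k} e_l = −∇^g_{e_l} e_k, and [e_k,e_l] = 2∇^g_{e_k} e_l = −T(e_k,e_l). -/
/-- If `e 1,…,e n` is a `∇`-parallel orthonormal frame for a flat metric
connection `∇ = ∇^g + (1/2)T` with skew torsion `T`, then each `e i` is Killing,
`∇^g_{e k} e l = -∇^g_{e l} e k` and `[e k, e l] = 2 ∇^g_{e k} e l = -T(e k, e l)`. -/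
theorem parallel_frame_killing {C X : Type*} [CommRing C] [Algebra ℝ C]
    [AddCommGroup X] [Module C X] {n : ℕ}
    (V : VectorFieldCalculus C X)
    (t : X → X → X)
    (hskew1 : ∀ a b c, V.g (t a b) c = - V.g (t b a) c)
    (hskew2 : ∀ a b c, V.g (t a b) c = - V.g (t a c) b)
    (nab : X → X → X)
    (hnab : ∀ a b, nab a b = V.lc a b + algebraMap ℝ C (1/2) • t a b)
    (hflat : ∀ a b c, nab a (nab b c) - nab b (nab a c) - nab (V.bracket a b) c = 0)
    (e : Fin n → X)
    (horth : ∀ i j, V.g (e i) (e j) = if i = j then 1 else 0)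
    (hspan : ∀ a, a = ∑ i, V.g a (e i) • e i)
    (hpar : ∀ i a, nab a (e i) = 0) :
    (∀ i, V.IsKilling (e i))
    ∧ (∀ k l, V.lc (e k) (e l) = - V.lc (e l) (e k))
    ∧ (∀ k l, V.bracket (e k) (e l) = (2 : C) • V.lc (e k) (e l))
    ∧ (∀ k l, V.bracket (e k) (e l) = - t (e k) (e l)) := by

  set c : C := algebraMap ℝ C (1/2) with hc
  have gzero : ∀ b, V.g 0 b = 0 := by
    intro b
    have := V.g_smul_left 0 b b
    simpa using this
  have gneg : ∀ a b, V.g (-a) b = - V.g a b := by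
    intro a b
    have h := V.g_add_left a (-a) b
    rw [add_neg_cancel, gzero] at h
    linear_combination -h
  have gsmul : ∀ (f : C) a b, V.g (f • a) b = f * V.g a b := V.g_smul_left
  -- lc on frame
  have hlce : ∀ a i, V.lc a (e i) = - (c • t a (e i)) := by
    intro a i
    have h := hpar i a
    rw [hnab] at h
    exact eq_neg_of_add_eq_zero_left h
  have htt : ∀ a b, t a b = - t b a := by
    intro a b
    have h1 := hspan (t a b)
    have h2 := hspan (t b a)
    rw [h1, h2]
    rw [← Finset.sum_neg_distrib]
    apply Finset.sum_congr rfl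
    intro i _
    rw [hskew1, neg_smul]
  have hkill : ∀ i, V.IsKilling (e i) := by
    intro i v w
    rw [hlce, hlce, gneg, gneg, gsmul, gsmul]
    have key : V.g (t v (e i)) w = - V.g (t w (e i)) v := by
      rw [hskew1, hskew2, neg_neg, hskew1]
    rw [key]
    ring
  have h2 : ∀ k l, V.lc (e k) (e l) = - V.lc (e l) (e k) := by
    intro k l
    rw [hlce, hlce, htt (e k) (e l)]
    module
  have h3 : ∀ k l, V.bracket (e k) (e l) = (2 : C) • V.lc (e k) (e l) := by
    intro k l
    rw [← V.lc_torsion_free, h2, two_smul]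
    abel
  have hc2 : (2 : C) * c = 1 := by
    have h2c : (algebraMap ℝ C) (2 : ℝ) = 2 := map_ofNat _ 2
    rw [hc, ← h2c, ← map_mul]
    norm_num
  have h4 : ∀ k l, V.bracket (e k) (e l) = - t (e k) (e l) := by
    intro k l
    rw [h3, hlce, smul_neg, smul_smul, hc2, one_smul]
  exact ⟨hkill, h2, h3, h4⟩
end

section
/- Let e_1,...,e_n be a ∇-parallel orthonormal frame for a flat metric connection ∇ with skew torsion T. Then the Riemannian curvature in this frame is R^g(e_i,e_j)e_k = −(1/4)[[e_i,e_j],e_k]. -/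
/-- For a `∇`-parallel orthonormal frame `e i` of a flat metric connection
`∇ = ∇^g + (1/2)T` with skew torsion, the Riemannian curvature is
`R^g(e i, e j) e k = -(1/4)[[e i, e j], e k]`. -/
theorem curvature_in_parallel_frame {C X : Type*} [CommRing C] [Algebra ℝ C]
    [AddCommGroup X] [Module C X] {n : ℕ}
    (V : VectorFieldCalculus C X)
    (t : X → X → X)
    (hskew1 : ∀ a b c, V.g (t a b) c = - V.g (t b a) c)
    (hskew2 : ∀ a b c, V.g (t a b) c = - V.g (t a c) b)
    (nab : X → X → X)
    (hnab : ∀ a b, nab a b = V.lc a b + algebraMap ℝ C (1/2) • t a b)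
    (hflat : ∀ a b c, nab a (nab b c) - nab b (nab a c) - nab (V.bracket a b) c = 0)
    (e : Fin n → X)
    (horth : ∀ i j, V.g (e i) (e j) = if i = j then 1 else 0)
    (hspan : ∀ a, a = ∑ i, V.g a (e i) • e i)
    (hpar : ∀ i a, nab a (e i) = 0)
    (Rg : X → X → X → X)
    (hRg : ∀ a b c, Rg a b c =
      V.lc a (V.lc b c) - V.lc b (V.lc a c) - V.lc (V.bracket a b) c)
    (i j k : Fin n) :
    Rg (e i) (e j) (e k)
      = algebraMap ℝ C (-(1/4)) • V.bracket (V.bracket (e i) (e j)) (e k) := by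
  obtain ⟨s, hs⟩ : ∃ s : C, s = algebraMap ℝ C (1/2) := ⟨_, rfl⟩
  have h2s : s + s = 1 := by rw [hs, ← map_add]; norm_num
  have hm4 : algebraMap ℝ C (-(1/4)) = -(s * s) := by
    rw [hs, ← map_mul, ← map_neg]; norm_num
  -- basic lemmas about g and D
  have g0l : ∀ b : X, V.g 0 b = 0 := by
    intro b
    have h : V.g (0 + 0) b = V.g 0 b + V.g 0 b := V.g_add_left 0 0 b
    rw [add_zero] at h
    exact (add_eq_right.mp h.symm)
  have gnegl : ∀ x y : X, V.g (-x) y = -(V.g x y) := by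
    intro x y
    have h : V.g (x + -x) y = V.g x y + V.g (-x) y := V.g_add_left x (-x) y
    rw [add_neg_cancel, g0l] at h
    linear_combination -h
  have gsubl : ∀ x y z : X, V.g (x - y) z = V.g x z - V.g y z := by
    intro x y z
    rw [sub_eq_add_neg, V.g_add_left, gnegl, sub_eq_add_neg]
  have gnegr : ∀ x y : X, V.g x (-y) = -(V.g x y) := by
    intro x y; rw [V.g_symm, gnegl, V.g_symm]
  have gsmulr : ∀ (f : C) (x y : X), V.g x (f • y) = f * V.g x y := by
    intro f x y; rw [V.g_symm, V.g_smul_left, V.g_symm]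
  have D0 : ∀ v : X, V.D v 0 = 0 := by
    intro v
    have h : V.D v (0 + 0) = V.D v 0 + V.D v 0 := V.D_add v 0 0
    rw [add_zero] at h
    exact (add_eq_right.mp h.symm)
  have Dneg : ∀ (v : X) (f : C), V.D v (-f) = -(V.D v f) := by
    intro v f
    have h : V.D v (f + -f) = V.D v f + V.D v (-f) := V.D_add v f (-f)
    rw [add_neg_cancel, D0] at h
    linear_combination -h
  -- extensionality via the frame
  have hext : ∀ x y : X, (∀ l, V.g x (e l) = V.g y (e l)) → x = y := by
    intro x y h
    have hsum : ∑ m, V.g x (e m) • e m = ∑ m, V.g y (e m) • e m :=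
      Finset.sum_congr rfl (fun m _ => by rw [h m])
    exact (hspan x).trans (hsum.trans (hspan y).symm)
  -- parallelism : lc a (e m) = -(s • t a (e m))
  have hlc_e : ∀ (a : X) (m : Fin n), V.lc a (e m) = -(s • t a (e m)) := by
    intro a m
    have h := hnab a (e m)
    rw [hpar m a, ← hs] at h
    exact eq_neg_of_add_eq_zero_left h.symm
  -- skew combination
  have hsk : ∀ (x : X) (c d : Fin n), V.g (t x (e c)) (e d) = V.g (t (e c) (e d)) x := by
    intro x c d
    rw [hskew1, hskew2, neg_neg]
  -- bracket of frame fields = - torsion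
  have hBt : ∀ a b : Fin n, V.bracket (e a) (e b) = - t (e a) (e b) := by
    intro a b
    apply hext
    intro l
    have h1 : V.g (V.bracket (e a) (e b)) (e l)
        = V.g (V.lc (e a) (e b)) (e l) - V.g (V.lc (e b) (e a)) (e l) := by
      rw [← V.lc_torsion_free, gsubl]
    rw [h1, hlc_e, hlc_e, gnegl, gnegl, V.g_smul_left, V.g_smul_left, gnegl,
      hskew1 (e b) (e a) (e l)]
    linear_combination (-(V.g (t (e a) (e b)) (e l))) * h2s
  -- lc on frame = s • bracket
  have hlcB : ∀ a b : Fin n, V.lc (e a) (e b) = s • V.bracket (e a) (e b) := by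
    intro a b
    rw [hBt, smul_neg, ← hlc_e]
  -- lc commutes with s-smul
  have lcsmulS : ∀ (z a : X), V.lc z (s • a) = s • V.lc z a := by
    intro z a
    rw [hs, V.lc_smul, V.D_algebraMap, zero_smul, zero_add]
  -- KEY scalar formula
  have hKEY : ∀ (x : X) (c d : Fin n), V.g (V.bracket x (e c)) (e d)
      = V.g (V.bracket (e c) (e d)) x - V.D (e c) (V.g x (e d)) := by
    intro x c d
    have h4 : V.g (V.bracket x (e c)) (e d)
        = V.g (V.lc x (e c)) (e d) - V.g (V.lc (e c) x) (e d) := by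
      rw [← V.lc_torsion_free, gsubl]
    have h1 : V.g (V.lc x (e c)) (e d) = -(s * V.g (t (e c) (e d)) x) := by
      rw [hlc_e, gnegl, V.g_smul_left, hsk]
    have hm := V.lc_metric (e c) x (e d)
    have h2 : V.g x (V.lc (e c) (e d)) = -(s * V.g (t (e c) (e d)) x) := by
      rw [hlc_e, gnegr, gsmulr, V.g_symm x]
    have h3 : V.g (V.bracket (e c) (e d)) x = -(V.g (t (e c) (e d)) x) := by
      rw [hBt, gnegl]
    linear_combination h4 + h1 + hm + h2 - h3 - (V.g (t (e c) (e d)) x) * h2s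
  -- scalarized Jacobi identity
  have hJac : ∀ a b c d : Fin n,
      (V.g (V.bracket (e c) (e d)) (V.bracket (e a) (e b))
        - V.D (e c) (V.g (V.bracket (e a) (e b)) (e d)))
      + (V.g (V.bracket (e a) (e d)) (V.bracket (e b) (e c))
        - V.D (e a) (V.g (V.bracket (e b) (e c)) (e d)))
      + (V.g (V.bracket (e b) (e d)) (V.bracket (e c) (e a))
        - V.D (e b) (V.g (V.bracket (e c) (e a)) (e d))) = 0 := by
    intro a b c d
    have h := congrArg (fun z => V.g z (e d)) (V.bracket_jacobi (e a) (e b) (e c))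
    simp only [V.g_add_left, g0l] at h
    rw [hKEY (V.bracket (e a) (e b)) c d, hKEY (V.bracket (e b) (e c)) a d,
      hKEY (V.bracket (e c) (e a)) b d] at h
    linear_combination h
  -- skewness of g(bracket, frame)
  have hF12 : ∀ a b c : Fin n, V.g (V.bracket (e b) (e a)) (e c)
      = -(V.g (V.bracket (e a) (e b)) (e c)) := by
    intro a b c
    rw [V.bracket_antisymm (e b) (e a), gnegl]
  have hF23 : ∀ a b c : Fin n, V.g (V.bracket (e a) (e b)) (e c)
      = -(V.g (V.bracket (e a) (e c)) (e b)) := by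
    intro a b c
    rw [hBt, hBt, gnegl, gnegl, hskew2, neg_neg]
  apply hext
  intro l
  -- canonical Jacobi instances
  have J1 := hJac i j k l
  rw [V.g_symm (V.bracket (e k) (e l)) (V.bracket (e i) (e j)),
    V.g_symm (V.bracket (e i) (e l)) (V.bracket (e j) (e k)),
    show V.g (V.bracket (e j) (e l)) (V.bracket (e k) (e i))
        = -(V.g (V.bracket (e i) (e k)) (V.bracket (e j) (e l))) by
      rw [V.bracket_antisymm (e k) (e i), gnegr, V.g_symm],
    show V.g (V.bracket (e k) (e i)) (e l) = -(V.g (V.bracket (e i) (e k)) (e l)) from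
      hF12 i k l, Dneg] at J1
  have J2 := hJac j k l i
  rw [show V.g (V.bracket (e l) (e i)) (V.bracket (e j) (e k))
        = -(V.g (V.bracket (e j) (e k)) (V.bracket (e i) (e l))) by
      rw [V.bracket_antisymm (e l) (e i), gnegl, V.g_symm],
    show V.g (V.bracket (e j) (e k)) (e i) = V.g (V.bracket (e i) (e j)) (e k) by
      rw [hF23 j k i, hF12 i j k, neg_neg],
    show V.g (V.bracket (e j) (e i)) (V.bracket (e k) (e l))
        = -(V.g (V.bracket (e i) (e j)) (V.bracket (e k) (e l))) from hF12 i j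
      |> fun _ => by rw [V.bracket_antisymm (e j) (e i), gnegl],
    show V.g (V.bracket (e k) (e l)) (e i) = V.g (V.bracket (e i) (e k)) (e l) by
      rw [hF23 k l i, hF12 i k l, neg_neg],
    show V.g (V.bracket (e k) (e i)) (V.bracket (e l) (e j))
        = V.g (V.bracket (e i) (e k)) (V.bracket (e j) (e l)) by
      rw [V.bracket_antisymm (e k) (e i), V.bracket_antisymm (e l) (e j), gnegl, gnegr,
        neg_neg],
    show V.g (V.bracket (e l) (e j)) (e i) = -(V.g (V.bracket (e i) (e j)) (e l)) by
      rw [hF23 l j i, hF12 i l j, neg_neg, hF23 i l j],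
    Dneg] at J2
  have J3 := hJac k l i j
  rw [show V.g (V.bracket (e k) (e l)) (e j) = V.g (V.bracket (e j) (e k)) (e l) by
      rw [hF23 k l j, hF12 j k l, neg_neg],
    show V.g (V.bracket (e k) (e j)) (V.bracket (e l) (e i))
        = V.g (V.bracket (e j) (e k)) (V.bracket (e i) (e l)) by
      rw [V.bracket_antisymm (e k) (e j), V.bracket_antisymm (e l) (e i), gnegl, gnegr,
        neg_neg],
    show V.g (V.bracket (e l) (e i)) (e j) = V.g (V.bracket (e i) (e j)) (e l) by
      rw [hF12 i l j, hF23 i l j, neg_neg],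
    show V.g (V.bracket (e l) (e j)) (V.bracket (e i) (e k))
        = -(V.g (V.bracket (e i) (e k)) (V.bracket (e j) (e l))) by
      rw [V.g_symm, V.bracket_antisymm (e l) (e j), gnegr],
    show V.g (V.bracket (e i) (e k)) (e j) = -(V.g (V.bracket (e i) (e j)) (e k)) from
      hF23 i k j,
    Dneg] at J3
  have J4 := hJac l i j k
  rw [show V.g (V.bracket (e j) (e k)) (V.bracket (e l) (e i))
        = -(V.g (V.bracket (e j) (e k)) (V.bracket (e i) (e l))) by
      rw [V.bracket_antisymm (e l) (e i), gnegr],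
    show V.g (V.bracket (e l) (e i)) (e k) = V.g (V.bracket (e i) (e k)) (e l) by
      rw [hF12 i l k, hF23 i l k, neg_neg],
    show V.g (V.bracket (e l) (e k)) (V.bracket (e i) (e j))
        = -(V.g (V.bracket (e i) (e j)) (V.bracket (e k) (e l))) by
      rw [V.bracket_antisymm (e l) (e k), gnegl, V.g_symm],
    show V.g (V.bracket (e j) (e l)) (e k) = -(V.g (V.bracket (e j) (e k)) (e l)) from
      hF23 j l k,
    Dneg] at J4
  -- main terms
  have hT1 : V.g (V.lc (e i) (V.lc (e j) (e k))) (e l)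
      = s * V.D (e i) (V.g (V.bracket (e j) (e k)) (e l))
        - s * (s * V.g (V.bracket (e j) (e k)) (V.bracket (e i) (e l))) := by
    rw [hlcB j k, lcsmulS, V.g_smul_left]
    have hm := V.lc_metric (e i) (V.bracket (e j) (e k)) (e l)
    have h5 : V.g (V.bracket (e j) (e k)) (V.lc (e i) (e l))
        = s * V.g (V.bracket (e j) (e k)) (V.bracket (e i) (e l)) := by
      rw [hlcB i l, gsmulr]
    linear_combination (-s) * hm + (-s) * h5
  have hT2 : V.g (V.lc (e j) (V.lc (e i) (e k))) (e l)
      = s * V.D (e j) (V.g (V.bracket (e i) (e k)) (e l))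
        - s * (s * V.g (V.bracket (e i) (e k)) (V.bracket (e j) (e l))) := by
    rw [hlcB i k, lcsmulS, V.g_smul_left]
    have hm := V.lc_metric (e j) (V.bracket (e i) (e k)) (e l)
    have h5 : V.g (V.bracket (e i) (e k)) (V.lc (e j) (e l))
        = s * V.g (V.bracket (e i) (e k)) (V.bracket (e j) (e l)) := by
      rw [hlcB j l, gsmulr]
    linear_combination (-s) * hm + (-s) * h5
  have hT3 : V.g (V.lc (V.bracket (e i) (e j)) (e k)) (e l)
      = s * V.g (V.bracket (e i) (e j)) (V.bracket (e k) (e l)) := by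
    rw [hlc_e, gnegl, V.g_smul_left, hsk,
      show t (e k) (e l) = -(V.bracket (e k) (e l)) by rw [hBt, neg_neg],
      gnegl, V.g_symm (V.bracket (e k) (e l))]
    ring
  rw [hRg, gsubl, gsubl, hT1, hT2, hT3, V.g_smul_left, hm4,
    hKEY (V.bracket (e i) (e j)) k l,
    V.g_symm (V.bracket (e k) (e l)) (V.bracket (e i) (e j))]
  linear_combination (-(s * s)) * J1 + (-(s * s)) * J2 + (s * s) * J3 + s * J4
    + (-(s * V.g (V.bracket (e j) (e k)) (V.bracket (e i) (e l)))
       + s * V.g (V.bracket (e i) (e k)) (V.bracket (e j) (e l))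
       - s * V.D (e l) (V.g (V.bracket (e i) (e j)) (e k))) * h2s
end

section
/- Let ∇ be a flat metric connection with skew torsion T on a Riemannian manifold and let 𝒯 be a tensor field that is a (pointwise universal) polynomial expression in T. Then ∇𝒯 = −2∇^g𝒯. In particular 𝒯 is ∇-parallel if and only if it is ∇^g-parallel. -/
namespace S11
variable {C X : Type*} [CommRing C] [Algebra ℝ C] [AddCommGroup X] [Module C X]
variable (V : VectorFieldCalculus C X)

lemma g_zero_left (b : X) : V.g 0 b = 0 := by
  have h := V.g_add_left 0 0 b
  rw [add_zero] at h
  linear_combination -h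

lemma g_neg_left (a b : X) : V.g (-a) b = -V.g a b := by
  have h := V.g_add_left a (-a) b
  rw [add_neg_cancel, g_zero_left] at h
  linear_combination -h

lemma g_sub_left (a a' b : X) : V.g (a - a') b = V.g a b - V.g a' b := by
  rw [sub_eq_add_neg, V.g_add_left, g_neg_left, sub_eq_add_neg]

lemma g_add_right (a b b' : X) : V.g a (b + b') = V.g a b + V.g a b' := by
  rw [V.g_symm, V.g_add_left, V.g_symm b a, V.g_symm b' a]

lemma g_neg_right (a b : X) : V.g a (-b) = -V.g a b := by
  rw [V.g_symm, g_neg_left, V.g_symm]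

lemma g_sub_right (a b b' : X) : V.g a (b - b') = V.g a b - V.g a b' := by
  rw [V.g_symm, g_sub_left, V.g_symm b a, V.g_symm b' a]

lemma g_smul_right (f : C) (a b : X) : V.g a (f • b) = f * V.g a b := by
  rw [V.g_symm, V.g_smul_left, V.g_symm]

lemma ext_vec {x y : X} (h : ∀ c, V.g x c = V.g y c) : x = y := by
  have h2 : ∀ c, V.g (x - y) c = 0 := by
    intro c; rw [g_sub_left, h c, sub_self]
  have := V.g_definite (x - y) (h2 (x - y))
  exact sub_eq_zero.mp this

lemma D_zero (v : X) : V.D v 0 = 0 := by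
  have := V.D_algebraMap v 0
  simpa using this

lemma D_neg (v : X) (f : C) : V.D v (-f) = -V.D v f := by
  have h := V.D_add v f (-f)
  rw [add_neg_cancel, D_zero] at h
  linear_combination -h

lemma D_sub (v : X) (f h : C) : V.D v (f - h) = V.D v f - V.D v h := by
  rw [sub_eq_add_neg, V.D_add, D_neg, sub_eq_add_neg]

lemma lc_zero_right (z : X) : V.lc z 0 = 0 := by
  have h := V.lc_add z 0 0
  rw [add_zero] at h
  exact left_eq_add.mp h

lemma lc_neg_right (z a : X) : V.lc z (-a) = -V.lc z a := by
  have h := V.lc_add z a (-a)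
  rw [add_neg_cancel, lc_zero_right] at h
  exact eq_neg_of_add_eq_zero_right h.symm

lemma lc_sub_right (z a b : X) : V.lc z (a - b) = V.lc z a - V.lc z b := by
  rw [sub_eq_add_neg, V.lc_add, lc_neg_right, sub_eq_add_neg]

lemma lc_zero_vec (a : X) : V.lc 0 a = 0 := by
  have h := V.lc_add_vec 0 0 a
  rw [add_zero] at h
  exact left_eq_add.mp h

lemma lc_neg_vec (z a : X) : V.lc (-z) a = -V.lc z a := by
  have h := V.lc_add_vec z (-z) a
  rw [add_neg_cancel, lc_zero_vec] at h
  exact eq_neg_of_add_eq_zero_right h.symm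

lemma lc_sub_vec (z w a : X) : V.lc (z - w) a = V.lc z a - V.lc w a := by
  rw [sub_eq_add_neg, V.lc_add_vec, lc_neg_vec, sub_eq_add_neg]

lemma lc_const_smul (z : X) (r : ℝ) (a : X) :
    V.lc z (algebraMap ℝ C r • a) = algebraMap ℝ C r • V.lc z a := by
  rw [V.lc_smul, V.D_algebraMap, zero_smul, zero_add]

end S11
namespace S11
section T
variable {C X : Type*} [CommRing C] [Algebra ℝ C] [AddCommGroup X] [Module C X]
variable (V : VectorFieldCalculus C X) (t : X → X → X)
variable (hs1 : ∀ a b c, V.g (t a b) c = - V.g (t b a) c)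
variable (hs2 : ∀ a b c, V.g (t a b) c = - V.g (t a c) b)

include hs1 hs2

lemma t_skew (a b : X) : t a b = -t b a := by
  apply ext_vec V
  intro c
  rw [g_neg_left]
  exact hs1 a b c

lemma t_add_right (a x y : X) : t a (x + y) = t a x + t a y := by
  apply ext_vec V
  intro c
  rw [V.g_add_left]
  linear_combination (hs2 a (x+y) c) - (g_add_right V (t a c) x y)
    - (hs2 a x c) - (hs2 a y c)

lemma t_sub_right (a x y : X) : t a (x - y) = t a x - t a y := by
  apply ext_vec V
  intro c
  rw [g_sub_left]
  linear_combination (hs2 a (x-y) c) - (g_sub_right V (t a c) x y)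
    - (hs2 a x c) + (hs2 a y c)

lemma t_smul_right (f : C) (a x : X) : t a (f • x) = f • t a x := by
  apply ext_vec V
  intro c
  rw [V.g_smul_left]
  have h : V.g (t a c) (f • x) = f * V.g (t a c) x := g_smul_right V f _ x
  linear_combination (hs2 a (f • x) c) - h - f * (hs2 a x c)

lemma t_sub_left (x y a : X) : t (x - y) a = t x a - t y a := by
  rw [t_skew V t hs1 hs2 (x - y) a, t_sub_right V t hs1 hs2 a x y,
    t_skew V t hs1 hs2 x a, t_skew V t hs1 hs2 y a]
  abel

lemma t_const_smul_left (r : ℝ) (x a : X) :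
    t (algebraMap ℝ C r • x) a = algebraMap ℝ C r • t x a := by
  rw [t_skew V t hs1 hs2 _ a, t_smul_right V t hs1 hs2, t_skew V t hs1 hs2 x a,
    smul_neg]

/-- cyclic invariance of the 3-form -/
lemma T_cyc (x y z : X) : V.g (t x y) z = V.g (t y z) x := by
  linear_combination (hs2 x y z) - (hs1 x z y) + (hs2 z x y) - (hs1 z y x)
end T
end S11
namespace S11
section Main
variable {C X : Type*} [CommRing C] [Algebra ℝ C] [AddCommGroup X] [Module C X]
variable (V : VectorFieldCalculus C X) (t : X → X → X)

/-- curvature of the Levi-Civita connection -/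
def Rg (a b c : X) : X :=
  V.lc a (V.lc b c) - V.lc b (V.lc a c) - V.lc (V.bracket a b) c

/-- (∇^g t)(a; b, c) -/
def Pt (a b c : X) : X :=
  V.lc a (t b c) - t (V.lc a b) c - t b (V.lc a c)

/-- (∇^g T)(a; b, c, d) -/
def Gs (a b c d : X) : C :=
  V.D a (V.g (t b c) d) - V.g (t (V.lc a b) c) d - V.g (t b (V.lc a c)) d
    - V.g (t b c) (V.lc a d)

lemma cancel2 (x y : C) (h : 2 * x = 2 * y) : x = y := by
  have h2 : (algebraMap ℝ C (1/2)) * 2 = 1 := by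
    rw [← map_ofNat (algebraMap ℝ C) 2, ← map_mul]
    norm_num
  calc x = ((algebraMap ℝ C (1/2)) * 2) * x := by rw [h2, one_mul]
  _ = (algebraMap ℝ C (1/2)) * (2 * x) := by ring
  _ = (algebraMap ℝ C (1/2)) * (2 * y) := by rw [h]
  _ = ((algebraMap ℝ C (1/2)) * 2) * y := by ring
  _ = y := by rw [h2, one_mul]

lemma Gs_eq (a b c d : X) : Gs V t a b c d = V.g (Pt V t a b c) d := by
  rw [Pt, g_sub_left, g_sub_left, Gs]
  linear_combination V.lc_metric a (t b c) d

lemma Rg_swap (a b c : X) : Rg V b a c = -Rg V a b c := by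
  simp only [Rg]
  rw [V.bracket_antisymm b a, lc_neg_vec]
  abel

lemma bianchi (a b c : X) : Rg V a b c + Rg V b c a + Rg V c a b = 0 := by
  have J := V.bracket_jacobi a b c
  have e1 : V.lc (V.bracket a b) c
      = V.lc c (V.bracket a b) + V.bracket (V.bracket a b) c := by
    rw [← V.lc_torsion_free (V.bracket a b) c]; abel
  have e2 : V.lc (V.bracket b c) a
      = V.lc a (V.bracket b c) + V.bracket (V.bracket b c) a := by
    rw [← V.lc_torsion_free (V.bracket b c) a]; abel
  have e3 : V.lc (V.bracket c a) b
      = V.lc b (V.bracket c a) + V.bracket (V.bracket c a) b := by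
    rw [← V.lc_torsion_free (V.bracket c a) b]; abel
  simp only [Rg]
  rw [e1, e2, e3]
  have hab : V.bracket a b = V.lc a b - V.lc b a := (V.lc_torsion_free a b).symm
  have hbc : V.bracket b c = V.lc b c - V.lc c b := (V.lc_torsion_free b c).symm
  have hca : V.bracket c a = V.lc c a - V.lc a c := (V.lc_torsion_free c a).symm
  rw [hab, hbc, hca] at J ⊢
  simp only [lc_sub_right V]
  have J' : -(V.bracket (V.lc a b - V.lc b a) c + V.bracket (V.lc b c - V.lc c b) a
      + V.bracket (V.lc c a - V.lc a c) b) = 0 := by rw [J, neg_zero]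
  rw [← J']
  abel

lemma bS1 (a b c d : X) : V.g (Rg V a b c) d + V.g (Rg V b a c) d = 0 := by
  rw [Rg_swap V a b c, g_neg_left]
  ring

lemma bS2 (a b c d : X) : V.g (Rg V a b c) d + V.g (Rg V a b d) c = 0 := by
  have hb := V.bracket_D a b (V.g c d)
  rw [V.lc_metric b c d, V.lc_metric a c d] at hb
  rw [V.D_add a, V.D_add b] at hb
  rw [V.lc_metric a (V.lc b c) d, V.lc_metric a c (V.lc b d),
    V.lc_metric b (V.lc a c) d, V.lc_metric b c (V.lc a d),
    V.lc_metric (V.bracket a b) c d] at hb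
  simp only [Rg, g_sub_left]
  linear_combination -hb + V.g_symm (V.lc a (V.lc b d)) c
    - V.g_symm (V.lc b (V.lc a d)) c - V.g_symm (V.lc (V.bracket a b) d) c

lemma gB (a b c d : X) :
    V.g (Rg V a b c) d + V.g (Rg V b c a) d + V.g (Rg V c a b) d = 0 := by
  have h := congrArg (fun v => V.g v d) (bianchi V a b c)
  simpa [V.g_add_left, g_zero_left V] using h

lemma S4 (a b c d : X) : V.g (Rg V a b c) d = V.g (Rg V c d a) b := by
  apply cancel2
  linear_combination (bS2 V a b c d) + (gB V a b c d) - (gB V a b d c)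
    - (bS1 V a c b d) + (bS2 V a c b d) - (gB V a c d b)
    + (bS1 V a d b c) - (bS2 V a d b c) + (bS1 V a d c b)
    - (bS2 V b c a d) + (gB V b c d a) + (bS2 V b d a c)
    - (bS1 V b d c a) - (bS2 V c d a b)

end Main
end S11
namespace S11
section Main2
set_option linter.unusedSectionVars false
variable {C X : Type*} [CommRing C] [Algebra ℝ C] [AddCommGroup X] [Module C X]
variable (V : VectorFieldCalculus C X) (t : X → X → X)
variable (hs1 : ∀ a b c, V.g (t a b) c = - V.g (t b a) c)
variable (hs2 : ∀ a b c, V.g (t a b) c = - V.g (t a c) b)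

include hs1 hs2

lemma gtt_fr (w x y : X) : V.g w (t x y) = -V.g w (t y x) := by
  rw [V.g_symm, hs1 x y w, V.g_symm]

lemma t_add_left (x y a : X) : t (x + y) a = t x a + t y a := by
  rw [t_skew V t hs1 hs2 (x + y) a, t_add_right V t hs1 hs2 a x y,
    t_skew V t hs1 hs2 x a, t_skew V t hs1 hs2 y a]
  abel

lemma Pt_swap (a b c : X) : Pt V t a c b = -Pt V t a b c := by
  simp only [Pt]
  rw [t_skew V t hs1 hs2 c b, lc_neg_right, t_skew V t hs1 hs2 (V.lc a c) b,
    t_skew V t hs1 hs2 c (V.lc a b)]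
  abel

lemma Gs_swap23 (a b c d : X) : Gs V t a c b d = -Gs V t a b c d := by
  rw [Gs_eq, Gs_eq, Pt_swap V t hs1 hs2, g_neg_left]

lemma Gs_swap34 (a b c d : X) : Gs V t a b d c = -Gs V t a b c d := by
  simp only [Gs]
  have hD : V.D a (V.g (t b d) c) = -V.D a (V.g (t b c) d) := by
    rw [show V.g (t b d) c = -V.g (t b c) d by linear_combination hs2 b c d, D_neg]
  linear_combination hD - (hs2 (V.lc a b) d c) - (hs2 b (V.lc a d) c)
    - (hs2 b d (V.lc a c))

section Flat
variable (nab : X → X → X)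
variable (hnab : ∀ a b, nab a b = V.lc a b + algebraMap ℝ C (1/2) • t a b)
variable (hflat : ∀ a b c, nab a (nab b c) - nab b (nab a c) - nab (V.bracket a b) c = 0)

include hnab

lemma expand_id (a b c : X) :
    nab a (nab b c) - nab b (nab a c) - nab (V.bracket a b) c
      = Rg V a b c + algebraMap ℝ C (1/2) • (Pt V t a b c - Pt V t b a c)
        + algebraMap ℝ C (1/2) • algebraMap ℝ C (1/2) •
            (t a (t b c) - t b (t a c)) := by
  simp only [hnab, Rg, Pt]
  rw [show V.bracket a b = V.lc a b - V.lc b a from (V.lc_torsion_free a b).symm]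
  simp only [V.lc_add, lc_const_smul V, t_add_right V t hs1 hs2,
    t_smul_right V t hs1 hs2, t_sub_left V t hs1 hs2, lc_sub_vec V]
  module

include hflat

lemma flat_expand (a b c : X) :
    Rg V a b c + algebraMap ℝ C (1/2) • (Pt V t a b c - Pt V t b a c)
      + algebraMap ℝ C (1/2) • algebraMap ℝ C (1/2) •
          (t a (t b c) - t b (t a c)) = 0 := by
  have H := hflat a b c
  rw [expand_id V t hs1 hs2 nab hnab a b c] at H
  exact H

lemma A1 (a b c d : X) :
    4 * V.g (Rg V a b c) d + 2 * Gs V t a b c d - 2 * Gs V t b a c d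
      - V.g (t a d) (t b c) + V.g (t b d) (t a c) = 0 := by
  have H := congrArg (fun x => V.g x d) (flat_expand V t hs1 hs2 nab hnab hflat a b c)
  simp only [g_zero_left V, V.g_add_left, g_sub_left V, V.g_smul_left] at H
  rw [← Gs_eq V t a b c d, ← Gs_eq V t b a c d, hs2 a (t b c) d, hs2 b (t a c) d] at H
  have c2 : 2 * (algebraMap ℝ C (1/2)) = 1 := by
    rw [← map_ofNat (algebraMap ℝ C) 2, ← map_mul]
    norm_num
  linear_combination 4 * H + (-2*(Gs V t a b c d - Gs V t b a c d)
    + (2*(algebraMap ℝ C (1/2)) + 1)*(V.g (t a d) (t b c) - V.g (t b d) (t a c))) * c2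

end Flat
end Main2
end S11
namespace S11
section Main3
set_option linter.unusedSectionVars false
variable {C X : Type*} [CommRing C] [Algebra ℝ C] [AddCommGroup X] [Module C X]
variable (V : VectorFieldCalculus C X) (t : X → X → X)
variable (hs1 : ∀ a b c, V.g (t a b) c = - V.g (t b a) c)
variable (hs2 : ∀ a b c, V.g (t a b) c = - V.g (t a c) b)
variable (nab : X → X → X)
variable (hnab : ∀ a b, nab a b = V.lc a b + algebraMap ℝ C (1/2) • t a b)
variable (hflat : ∀ a b c, nab a (nab b c) - nab b (nab a c) - nab (V.bracket a b) c = 0)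

include hs1 hs2 hnab hflat

lemma E2gen (a b c d : X) :
    2 * (Gs V t a b c d + Gs V t b c a d + Gs V t c a b d)
      = V.g (t a b) (t c d) + V.g (t a c) (t d b) + V.g (t a d) (t b c) := by
  apply cancel2
  linear_combination (A1 V t hs1 hs2 nab hnab hflat a b c d) - 4 * (gB V a b c d) + 2 * (Gs_swap23 V t hs1 hs2 a b c d) - (V.g_symm (t a b) (t c d)) - (hs1 a b (t c d)) + 2 * (V.g_symm (t a c) (t b d)) - 2 * (gtt_fr V t hs1 hs2 (t a c) b d) - (gtt_fr V t hs1 hs2 (t a d) b c) + 2 * (Gs_swap23 V t hs1 hs2 b a c d) + (V.g_symm (t b a) (t c d)) + (A1 V t hs1 hs2 nab hnab hflat b c a d) + (gtt_fr V t hs1 hs2 (t b d) a c) + (A1 V t hs1 hs2 nab hnab hflat c a b d) + 2 * (Gs_swap23 V t hs1 hs2 c a b d)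

lemma Pgen (a b c d : X) :
    Gs V t a b c d - Gs V t b a c d = Gs V t c d a b - Gs V t d c a b := by
  apply cancel2
  linear_combination (A1 V t hs1 hs2 nab hnab hflat a b c d) - 4 * (S4 V a b c d) + (V.g_symm (t a d) (t b c)) + (gtt_fr V t hs1 hs2 (t b c) a d) - (hs1 b c (t d a)) - (gtt_fr V t hs1 hs2 (t b d) a c) + (hs1 b d (t c a)) - (A1 V t hs1 hs2 nab hnab hflat c d a b)

lemma sixG (a b c d : X) :
    6 * Gs V t a b c d
      = V.g (t a b) (t c d) + V.g (t a c) (t d b) + V.g (t a d) (t b c) := by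
  linear_combination 4 * (Gs_swap23 V t hs1 hs2 a b c d) + 2 * (Gs_swap34 V t hs1 hs2 a b c d) - (gtt_fr V t hs1 hs2 (t a b) c d) - (E2gen V t hs1 hs2 nab hnab hflat a b c d) + 2 * (Pgen V t hs1 hs2 nab hnab hflat a b c d) - 2 * (Gs_swap23 V t hs1 hs2 a b d c) - 2 * (Gs_swap34 V t hs1 hs2 a c b d) - (gtt_fr V t hs1 hs2 (t a c) b d) - 2 * (Pgen V t hs1 hs2 nab hnab hflat a c b d) + 2 * (Gs_swap23 V t hs1 hs2 a c d b) - (gtt_fr V t hs1 hs2 (t a d) b c) + (E2gen V t hs1 hs2 nab hnab hflat a d b c) - (E2gen V t hs1 hs2 nab hnab hflat a d c b) + 2 * (Gs_swap23 V t hs1 hs2 b a c d) - 2 * (Gs_swap23 V t hs1 hs2 b a d c) + 2 * (Gs_swap23 V t hs1 hs2 c a d b)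

end Main3
end S11
/-- Let `∇ = ∇^g + (1/2)T` be a flat metric connection with skew torsion
and let `𝒯` be a tensor field that is a pointwise universal polynomial in `T`: its
`∇`- resp. `∇^g`-covariant derivatives in direction `v` are obtained by applying one and the
same linear map `dF` (the derivative of the polynomial at `T`) to `∇_v T` resp. `∇^g_v T`.
Then `∇𝒯 = -2 ∇^g𝒯`; in particular `𝒯` is `∇`-parallel iff it is `∇^g`-parallel. -/
theorem tensor_polynomial_derivative {C X W : Type*} [CommRing C] [Algebra ℝ C]
    [AddCommGroup X] [Module C X] [AddCommGroup W] [Module ℝ W]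
    (V : VectorFieldCalculus C X)
    (t : X → X → X)
    (hskew1 : ∀ a b c, V.g (t a b) c = - V.g (t b a) c)
    (hskew2 : ∀ a b c, V.g (t a b) c = - V.g (t a c) b)
    (nab : X → X → X)
    (hnab : ∀ a b, nab a b = V.lc a b + algebraMap ℝ C (1/2) • t a b)
    (hflat : ∀ a b c, nab a (nab b c) - nab b (nab a c) - nab (V.bracket a b) c = 0)
    -- the 3-form T and its covariant derivative with respect to a connection m
    (T : X → X → X → C) (hT : ∀ a b c, T a b c = V.g (t a b) c)
    (covT : (X → X → X) → X → X → X → X → C)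
    (hcovT : ∀ m v a b c, covT m v a b c
      = V.D v (T a b c) - T (m v a) b c - T a (m v b) c - T a b (m v c))
    -- the derivatives of the tensor polynomial 𝒯 = F(T) in direction v
    (dF : (X → X → X → C) → W) (hdF : IsLinearMap ℝ dF)
    (nablaTau nablagTau : X → W)
    (h1 : ∀ v, nablaTau v = dF (covT nab v))
    (h2 : ∀ v, nablagTau v = dF (covT V.lc v)) :
    (∀ v, nablaTau v = (-2 : ℝ) • nablagTau v)
    ∧ ((∀ v, nablaTau v = 0) ↔ (∀ v, nablagTau v = 0)) := by
  have hGc : ∀ v a b c, covT V.lc v a b c = S11.Gs V t v a b c := by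
    intro v a b c
    simp only [hcovT, hT, S11.Gs]
  have step1 : ∀ v a b c, covT nab v a b c
      = S11.Gs V t v a b c - algebraMap ℝ C (1/2) *
        (V.g (t v a) (t b c) + V.g (t v b) (t c a) + V.g (t v c) (t a b)) := by
    intro v a b c
    rw [hcovT]
    simp only [hT, hnab]
    simp only [S11.t_add_left V t hskew1 hskew2, S11.t_const_smul_left V t hskew1 hskew2,
      S11.t_add_right V t hskew1 hskew2, S11.t_smul_right V t hskew1 hskew2,
      V.g_add_left, V.g_smul_left, S11.g_add_right V, S11.g_smul_right V, S11.Gs]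
    have cA : V.g (t (t v a) b) c = V.g (t v a) (t b c) := by
      linear_combination (S11.T_cyc V t hskew1 hskew2 (t v a) b c)
        + (V.g_symm (t b c) (t v a))
    have cB : V.g (t a (t v b)) c = V.g (t v b) (t c a) := by
      linear_combination (hskew1 a (t v b) c) - (S11.T_cyc V t hskew1 hskew2 (t v b) a c)
        - (V.g_symm (t a c) (t v b)) - (S11.gtt_fr V t hskew1 hskew2 (t v b) c a)
    have cC : V.g (t a b) (t v c) = V.g (t v c) (t a b) := V.g_symm _ _
    linear_combination (-(algebraMap ℝ C (1/2))) * (cA + cB + cC)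
  have hNc : ∀ v a b c, covT nab v a b c = (-2 : C) * covT V.lc v a b c := by
    intro v a b c
    have s := step1 v a b c
    rw [← S11.sixG V t hskew1 hskew2 nab hnab hflat v a b c] at s
    rw [s, hGc v a b c]
    have h6 : algebraMap ℝ C (1/2) * 6 = 3 := by
      rw [show ((6:C)) = algebraMap ℝ C 6 from (map_ofNat (algebraMap ℝ C) 6).symm,
        ← map_mul]
      norm_num
      exact map_ofNat (algebraMap ℝ C) 3
    linear_combination (-(S11.Gs V t v a b c)) * h6
  have key : ∀ v, covT nab v = (-2 : ℝ) • covT V.lc v := by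
    intro v
    funext a b c
    simp only [Pi.smul_apply]
    calc covT nab v a b c = (-2 : C) * covT V.lc v a b c := hNc v a b c
    _ = (-2 : ℝ) • covT V.lc v a b c := by rw [Algebra.smul_def, map_neg, map_ofNat]
  have main : ∀ v, nablaTau v = (-2 : ℝ) • nablagTau v := by
    intro v
    rw [h1 v, h2 v, key v, hdF.map_smul]
  refine ⟨main, ?_, ?_⟩
  · intro h v
    have h2' : nablagTau v = (-(1/2) : ℝ) • nablaTau v := by
      rw [main v, smul_smul]
      norm_num
    rw [h2', h v, smul_zero]
  · intro h v
    rw [main v, h v, smul_zero]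
end

section
/- Let (M,g) be a Riemannian manifold and V a vector field, and let ∇ be the metric connection with vectorial torsion: ∇_X Y = ∇^g_X Y + ⟨X,Y⟩V − ⟨V,Y⟩X. If ∇ is flat and ∇V = 0, then (M,g) has constant sectional curvature −‖V‖² and the divergence of V is the constant (n−1)‖V‖²; moreover ∇^g_V V = 0, i.e. the integral curves of V are geodesics. -/
/-- Let `∇_a b = ∇^g_a b + ⟨a,b⟩v - ⟨v,b⟩a` be the metric connection with
vectorial torsion given by a vector field `v` on `(Mⁿ,g)`, `n ≥ 2`.  If `∇` is flat and
`∇v = 0`, then `M` has constant sectional curvature `-‖v‖²`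
(`R^g(a,b)c = -‖v‖²(⟨b,c⟩a - ⟨a,c⟩b)`), the divergence of `v` is the constant
`(n-1)‖v‖²`, and `∇^g_v v = 0` (the integral curves of `v` are geodesics). -/
theorem vectorial_torsion_parallel {C X : Type*} [CommRing C] [Algebra ℝ C]
    [AddCommGroup X] [Module C X] {n : ℕ} (hn : 2 ≤ n)
    (V : VectorFieldCalculus C X) (v : X)
    (nab : X → X → X)
    (hnab : ∀ a b, nab a b = V.lc a b + V.g a b • v - V.g v b • a)
    (hflat : ∀ a b c, nab a (nab b c) - nab b (nab a c) - nab (V.bracket a b) c = 0)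
    (hparv : ∀ a, nab a v = 0)
    (e : Fin n → X)
    (horth : ∀ i j, V.g (e i) (e j) = if i = j then 1 else 0)
    (hspan : ∀ a, a = ∑ i, V.g a (e i) • e i)
    (Rg : X → X → X → X)
    (hRg : ∀ a b c, Rg a b c =
      V.lc a (V.lc b c) - V.lc b (V.lc a c) - V.lc (V.bracket a b) c) :
    (∀ a b c, Rg a b c = - (V.g v v • (V.g b c • a - V.g a c • b)))
    ∧ (∑ i, V.g (V.lc (e i) v) (e i) = ((n : C) - 1) * V.g v v)
    ∧ V.lc v v = 0 := by
  classical
  -- abbreviations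
  have g_zero_left : ∀ b, V.g 0 b = 0 := by
    intro b
    have h := V.g_smul_left 0 0 b
    simpa using h
  have g_zero_right : ∀ b, V.g b 0 = 0 := by
    intro b; rw [V.g_symm]; exact g_zero_left b
  have g_add_right : ∀ a b c, V.g a (b + c) = V.g a b + V.g a c := by
    intro a b c; rw [V.g_symm, V.g_add_left, V.g_symm b a, V.g_symm c a]
  have g_smul_right : ∀ (f : C) a b, V.g a (f • b) = f * V.g a b := by
    intro f a b; rw [V.g_symm, V.g_smul_left, V.g_symm]
  have g_neg_right : ∀ a b, V.g a (-b) = - V.g a b := by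
    intro a b
    have := g_smul_right (-1) a b
    simpa using this
  have g_sub_right : ∀ a b c, V.g a (b - c) = V.g a b - V.g a c := by
    intro a b c
    rw [sub_eq_add_neg, g_add_right, g_neg_right, sub_eq_add_neg]
  have g_neg_left : ∀ a b, V.g (-a) b = - V.g a b := by
    intro a b; rw [V.g_symm, g_neg_right, V.g_symm]
  have g_sub_left : ∀ a b c, V.g (a - b) c = V.g a c - V.g b c := by
    intro a b c; rw [V.g_symm, g_sub_right, V.g_symm a c, V.g_symm b c]
  have lc_neg : ∀ z a, V.lc z (-a) = - V.lc z a := by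
    intro z a
    have h := V.lc_smul z (-1) a
    have h2 := V.D_algebraMap z (-1)
    simp only [map_neg, map_one] at h2
    rw [h2] at h
    simpa using h
  have lc_sub : ∀ z a b, V.lc z (a - b) = V.lc z a - V.lc z b := by
    intro z a b
    rw [sub_eq_add_neg, V.lc_add, lc_neg, sub_eq_add_neg]
  -- parallel v gives lc _ v
  have hlcv : ∀ a, V.lc a v = V.g v v • a - V.g a v • v := by
    intro a
    have h := hparv a
    rw [hnab] at h
    linear_combination (norm := module) h
  -- part 3
  have part3 : V.lc v v = 0 := by
    rw [hlcv v]
    abel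
  -- part 1 : curvature
  have part1 : ∀ a b c, Rg a b c = - (V.g v v • (V.g b c • a - V.g a c • b)) := by
    intro a b c
    have h := hflat a b c
    simp only [hnab] at h
    simp only [V.lc_add, lc_sub, V.lc_smul, V.lc_metric, g_add_right, g_sub_right,
      g_smul_right, V.g_add_left, g_sub_left, V.g_smul_left] at h
    -- replace lc a v, lc b v
    simp only [hlcv, g_sub_right, g_sub_left, g_smul_right, V.g_smul_left] at h
    -- torsion-free: lc a b = bracket a b + lc b a
    have htor : V.lc a b = V.bracket a b + V.lc b a := by
      have := V.lc_torsion_free a b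
      linear_combination (norm := module) this
    rw [htor] at h
    simp only [V.g_add_left, g_add_right] at h
    rw [V.g_symm v b, V.g_symm v a, V.g_symm b a] at h
    rw [hRg]
    linear_combination (norm := module) h
  refine ⟨part1, ?_, part3⟩
  -- part 2 : divergence
  have gsum : ∀ (f : Fin n → C) (b : X), V.g (∑ i, f i • e i) b = ∑ i, f i * V.g (e i) b := by
    intro f b
    induction (Finset.univ : Finset (Fin n)) using Finset.cons_induction with
    | empty => simpa using g_zero_left b
    | cons i s hi ih =>
        rw [Finset.sum_cons, Finset.sum_cons, V.g_add_left, V.g_smul_left, ih]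
  have hvv : V.g v v = ∑ i, V.g v (e i) * V.g (e i) v := by
    nth_rewrite 1 [hspan v]
    rw [gsum]
  calc ∑ i, V.g (V.lc (e i) v) (e i)
      = ∑ i, (V.g v v * V.g (e i) (e i) - V.g (e i) v * V.g v (e i)) := by
        refine Finset.sum_congr rfl fun i _ => ?_
        rw [hlcv, g_sub_left, V.g_smul_left, V.g_smul_left, V.g_symm v (e i)]
    _ = ((n : C) - 1) * V.g v v := by
        rw [Finset.sum_sub_distrib]
        have h1 : ∑ i : Fin n, V.g v v * V.g (e i) (e i) = (n : C) * V.g v v := by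
          simp only [horth, if_pos rfl, mul_one]
          simp [Finset.sum_const, Finset.card_univ, nsmul_eq_mul]
        have h2 : ∑ i : Fin n, V.g (e i) v * V.g v (e i) = V.g v v := by
          rw [hvv]
          exact Finset.sum_congr rfl fun i _ => mul_comm _ _
        rw [h1, h2]
        ring
end

section
/- Let T be a 3-form on a Euclidean vector space V such that the bilinear operation defined by ⟨T(X,Y),Z⟩ = T(X,Y,Z) satisfies the Jacobi identity, i.e. T(T(X,Y),Z) + T(T(Y,Z),X) + T(T(Z,X),Y) = 0 for all X,Y,Z. Then the 4-form σ_T(X,Y,Z,W) = ⟨T(X,Y),T(Z,W)⟩ + ⟨T(Y,Z),T(X,W)⟩ + ⟨T(Z,X),T(Y,W)⟩ vanishes identically. Conversely, if σ_T = 0 then the bracket T(·,·) satisfies the Jacobi identity. -/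
/-- Let `T` be a 3-form on a Euclidean vector space, with associated bracket
`t X Y` defined by `⟨t X Y, Z⟩ = T(X,Y,Z)`.  Then `t` satisfies the Jacobi identity if and
only if the 4-form
`σ_T(X,Y,Z,W) = ⟨T(X,Y),T(Z,W)⟩ + ⟨T(Y,Z),T(X,W)⟩ + ⟨T(Z,X),T(Y,W)⟩` vanishes identically. -/
theorem jacobi_iff_sigma_zero {n : ℕ}
    (T : EuclideanSpace ℝ (Fin n) → EuclideanSpace ℝ (Fin n) → EuclideanSpace ℝ (Fin n) → ℝ)
    (hlin : ∀ Y Z, IsLinearMap ℝ fun X => T X Y Z)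
    (hskew1 : ∀ X Y Z, T X Y Z = - T Y X Z)
    (hskew2 : ∀ X Y Z, T X Y Z = - T X Z Y)
    (t : EuclideanSpace ℝ (Fin n) → EuclideanSpace ℝ (Fin n) → EuclideanSpace ℝ (Fin n))
    (ht : ∀ X Y Z, (inner ℝ (t X Y) Z : ℝ) = T X Y Z) :
    (∀ X Y Z, t (t X Y) Z + t (t Y Z) X + t (t Z X) Y = 0)
      ↔ (∀ X Y Z W, (inner ℝ (t X Y) (t Z W) : ℝ) + inner ℝ (t Y Z) (t X W)
          + inner ℝ (t Z X) (t Y W) = 0) := by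
  have cyc : ∀ A B C, T A B C = T B C A := by
    intro A B C
    rw [hskew1, hskew2 B A C, neg_neg]
  have key : ∀ X Y Z W, (inner ℝ (t (t X Y) Z) W : ℝ) = inner ℝ (t X Y) (t Z W) := by
    intro X Y Z W
    rw [ht, cyc, ← ht, real_inner_comm]
  have sigma : ∀ X Y Z W,
      (inner ℝ (t (t X Y) Z + t (t Y Z) X + t (t Z X) Y) W : ℝ)
        = inner ℝ (t X Y) (t Z W) + inner ℝ (t Y Z) (t X W) + inner ℝ (t Z X) (t Y W) := by
    intro X Y Z W
    rw [inner_add_left, inner_add_left, key, key, key]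
  constructor
  · intro hJ X Y Z W
    rw [← sigma, hJ, inner_zero_left]
  · intro hσ X Y Z
    have h : ∀ W, (inner ℝ (t (t X Y) Z + t (t Y Z) X + t (t Z X) Y) W : ℝ) = 0 := by
      intro W; rw [sigma]; exact hσ X Y Z W
    have := h (t (t X Y) Z + t (t Y Z) X + t (t Z X) Y)
    exact inner_self_eq_zero.mp this
end

section
/- Let T be a 3-form on a Euclidean vector space V of dimension n that defines a vector cross product, i.e. ‖T(X,Y)‖² = 4(‖X‖²‖Y‖² − ⟨X,Y⟩²) for all X,Y (so (1/2)T(·,·) is a cross product). Then n ∈ {3, 7} (assuming n ≥ 3 and T ≠ 0). -/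
local notation "⟦" x ", " y "⟧" => (inner ℝ x y : ℝ)

structure CrossAux (E : Type*) [NormedAddCommGroup E] [InnerProductSpace ℝ E] where
  p : E → E → E
  skew : ∀ x y, p x y = - p y x
  add_right : ∀ x y z, p x (y + z) = p x y + p x z
  smul_right : ∀ (r : ℝ) (x y : E), p x (r • y) = r • p x y
  cyc : ∀ x y z, ⟦p x y, z⟧ = ⟦p y z, x⟧
  lag : ∀ x y z, ⟦p x y, p x z⟧ = ⟦x, x⟧ * ⟦y, z⟧ - ⟦x, y⟧ * ⟦x, z⟧

namespace CrossAux

variable {E : Type*} [NormedAddCommGroup E] [InnerProductSpace ℝ E] (C : CrossAux E)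

lemma neg_right (x y : E) : C.p x (-y) = - C.p x y := by
  have := C.smul_right (-1) x y; simpa using this

lemma zero_right (x : E) : C.p x 0 = 0 := by
  have := C.smul_right 0 x 0; simpa using this

lemma orth1 (x y : E) : ⟦C.p x y, x⟧ = 0 := by
  have h1 := C.cyc x y x
  rw [C.skew y x, inner_neg_left] at h1
  have : (⟦C.p x y, x⟧ : ℝ) = - ⟦C.p x y, x⟧ := h1
  linarith

lemma orth2 (x y : E) : ⟦C.p x y, y⟧ = 0 := by
  rw [C.skew, inner_neg_left, C.orth1]; ring

lemma tr (x y : E) : C.p x (C.p x y) = ⟦x, y⟧ • x - ⟦x, x⟧ • y := by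
  apply ext_inner_right ℝ
  intro z
  have h1 : ⟦C.p x (C.p x y), z⟧ = - ⟦C.p x z, C.p x y⟧ := by
    rw [C.cyc x (C.p x y) z, C.cyc (C.p x y) z x, C.skew z x, inner_neg_left,
      real_inner_comm]
  rw [h1, C.lag, inner_sub_left, real_inner_smul_left, real_inner_smul_left]
  linear_combination (⟦x, x⟧) * real_inner_comm z y

lemma add_left (x y z : E) : C.p (x + y) z = C.p x z + C.p y z := by
  rw [C.skew, C.add_right, C.skew z x, C.skew z y]; abel

lemma pol (x y z : E) : C.p x (C.p y z) + C.p y (C.p x z)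
    = ⟦x, z⟧ • y + ⟦y, z⟧ • x - (2 * ⟦x, y⟧) • z := by
  have h := C.tr (x + y) z
  rw [C.add_left, C.add_left, C.add_right, C.add_right] at h
  have hi : ⟦x + y, z⟧ = ⟦x, z⟧ + ⟦y, z⟧ := inner_add_left x y z
  have hj : ⟦x + y, x + y⟧ = ⟦x, x⟧ + 2 * ⟦x, y⟧ + ⟦y, y⟧ := by
    rw [inner_add_left, inner_add_right, inner_add_right, real_inner_comm y x]; ring
  rw [hi, hj] at h
  linear_combination (norm := module) h - C.tr x z - C.tr y z

lemma pol0 {x y z : E} (hxy : ⟦x, y⟧ = 0) (hxz : ⟦x, z⟧ = 0) (hyz : ⟦y, z⟧ = 0) :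
    C.p x (C.p y z) = - C.p y (C.p x z) := by
  have h := C.pol x y z
  rw [hxy, hxz, hyz] at h
  linear_combination (norm := module) h

lemma tr0 {x y : E} (hx : ⟦x, x⟧ = 1) (hxy : ⟦x, y⟧ = 0) : C.p x (C.p x y) = -y := by
  rw [C.tr, hx, hxy]; simp

end CrossAux

lemma exists_unit_orthogonal {E : Type*} [NormedAddCommGroup E] [InnerProductSpace ℝ E]
    [FiniteDimensional ℝ E] (s : Finset E) (hs : s.card < Module.finrank ℝ E) :
    ∃ u : E, ⟦u, u⟧ = 1 ∧ ∀ x ∈ s, ⟦x, u⟧ = 0 := by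
  set K : Submodule ℝ E := Submodule.span ℝ (s : Set E) with hK
  have hrank : Module.finrank ℝ K ≤ s.card := finrank_span_finset_le_card s
  have hne : Kᗮ ≠ ⊥ := by
    intro h
    have : K = ⊤ := Submodule.orthogonal_eq_bot_iff.mp h
    rw [this, finrank_top] at hrank
    omega
  obtain ⟨x, hxK, hx0⟩ := (Submodule.ne_bot_iff _).mp hne
  refine ⟨‖x‖⁻¹ • x, ?_, ?_⟩
  · rw [real_inner_smul_left, inner_smul_right_eq_smul]
    simp only [smul_eq_mul]
    rw [real_inner_self_eq_norm_sq]
    have : ‖x‖ ≠ 0 := norm_ne_zero_iff.mpr hx0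
    field_simp
  · intro y hy
    rw [inner_smul_right_eq_smul]
    have := (Submodule.mem_orthogonal K x).mp hxK y (Submodule.subset_span hy)
    simp [this]

set_option maxHeartbeats 2000000 in
lemma crossAux_dim {n : ℕ} (hn : 4 ≤ n)
    (C : CrossAux (EuclideanSpace ℝ (Fin n))) : n = 7 := by
  classical
  set E := EuclideanSpace ℝ (Fin n)
  set a : E := EuclideanSpace.single ⟨0, by omega⟩ (1:ℝ) with ha
  set b : E := EuclideanSpace.single ⟨1, by omega⟩ (1:ℝ) with hb
  have haa : ⟦a, a⟧ = 1 := by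
    rw [ha, EuclideanSpace.inner_single_left]
    simp [EuclideanSpace.single_apply]
  have hbb : ⟦b, b⟧ = 1 := by
    rw [hb, EuclideanSpace.inner_single_left]
    simp [EuclideanSpace.single_apply]
  have hab : ⟦a, b⟧ = 0 := by
    rw [ha, EuclideanSpace.inner_single_left]
    simp [hb, EuclideanSpace.single_apply]
  set c : E := C.p a b with hc
  have hca : ⟦c, a⟧ = 0 := C.orth1 a b
  have hcb : ⟦c, b⟧ = 0 := C.orth2 a b
  have hac : ⟦a, c⟧ = 0 := (real_inner_comm c a).trans hca
  have hbc : ⟦b, c⟧ = 0 := (real_inner_comm c b).trans hcb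
  have hba : ⟦b, a⟧ = 0 := (real_inner_comm a b).trans hab
  have hcc : ⟦c, c⟧ = 1 := by
    rw [hc, C.lag, haa, hbb, hab]; ring
  have hfr : Module.finrank ℝ E = n := finrank_euclideanSpace_fin
  -- a unit vector orthogonal to a, b, c
  obtain ⟨u, huu, hu⟩ := exists_unit_orthogonal ({a, b, c} : Finset E) (by
    have h1 : ({a, b, c} : Finset E).card ≤ 3 := by
      apply le_trans (Finset.card_insert_le _ _)
      have := Finset.card_insert_le b ({c} : Finset E)
      simp at this ⊢
      omega
    omega)
  have hau : ⟦a, u⟧ = 0 := hu a (by simp)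
  have hbu : ⟦b, u⟧ = 0 := hu b (by simp)
  have hcu : ⟦c, u⟧ = 0 := hu c (by simp)
  have hua : ⟦u, a⟧ = 0 := (real_inner_comm a u).trans hau
  have hub : ⟦u, b⟧ = 0 := (real_inner_comm b u).trans hbu
  have huc : ⟦u, c⟧ = 0 := (real_inner_comm c u).trans hcu
  -- useful products
  have hpac : C.p a c = -b := by rw [hc, C.tr, hab, haa]; simp
  have hpba : C.p b a = -c := by rw [hc, ← C.skew]
  have hpbc : C.p b c = a := by
    rw [hc, C.skew a b, C.neg_right, C.tr, hba, hbb]; simp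
  set A1 : E := C.p a u with hA1
  set B1 : E := C.p b u with hB1
  set C1 : E := C.p c u with hC1
  have hA1A1 : ⟦A1, A1⟧ = 1 := by rw [hA1, C.lag, haa, hau, huu]; ring
  have hB1B1 : ⟦B1, B1⟧ = 1 := by rw [hB1, C.lag, hbb, hbu, huu]; ring
  have hC1C1 : ⟦C1, C1⟧ = 1 := by rw [hC1, C.lag, hcc, hcu, huu]; ring
  have hA1a : ⟦A1, a⟧ = 0 := C.orth1 a u
  have hA1u : ⟦A1, u⟧ = 0 := C.orth2 a u
  have hB1b : ⟦B1, b⟧ = 0 := C.orth1 b u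
  have hB1u : ⟦B1, u⟧ = 0 := C.orth2 b u
  have hC1c : ⟦C1, c⟧ = 0 := C.orth1 c u
  have hC1u : ⟦C1, u⟧ = 0 := C.orth2 c u
  have hA1b : ⟦A1, b⟧ = 0 := by
    rw [show b = -(C.p a c) by rw [hpac, neg_neg], inner_neg_right, hA1, C.lag,
      hau, hac, huc]
    ring
  have hA1c : ⟦A1, c⟧ = 0 := by
    rw [hc, hA1, C.lag, hab, hau, hub]; ring
  have hB1a : ⟦B1, a⟧ = 0 := by
    rw [← hpbc, hB1, C.lag, hbu, hbc, huc]; ring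
  have hB1c : ⟦B1, c⟧ = 0 := by
    rw [show c = -(C.p b a) by rw [hpba, neg_neg], inner_neg_right, hB1, C.lag,
      hbu, hba, hua]
    ring
  have hC1a : ⟦C1, a⟧ = 0 := by
    rw [← hpbc, C.skew b c, inner_neg_right, hC1, C.lag, hcu, hcb, hub]; ring
  have hC1b : ⟦C1, b⟧ = 0 := by
    rw [show b = -(C.p a c) by rw [hpac, neg_neg], C.skew a c, neg_neg, hC1, C.lag,
      hcu, hca, hua]
    ring
  have hA1B1 : ⟦A1, B1⟧ = 0 := by
    rw [hA1, hB1, C.skew a u, C.skew b u, inner_neg_neg, C.lag, huu, hua, hub, hab]; ring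
  have hA1C1 : ⟦A1, C1⟧ = 0 := by
    rw [hA1, hC1, C.skew a u, C.skew c u, inner_neg_neg, C.lag, huu, hua, huc, hac]; ring
  have hB1C1 : ⟦B1, C1⟧ = 0 := by
    rw [hB1, hC1, C.skew b u, C.skew c u, inner_neg_neg, C.lag, huu, hub, huc, hbc]; ring
  -- the seven orthonormal vectors
  set f : Fin 7 → E := ![a, b, c, u, A1, B1, C1] with hf
  have horth : Orthonormal ℝ f := by
    rw [orthonormal_iff_ite]
    intro i j
    fin_cases i <;> fin_cases j <;>
      simp only [hf, Matrix.cons_val_zero, Matrix.cons_val_one, Matrix.head_cons,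
        Matrix.cons_val_two, Matrix.tail_cons, Matrix.cons_val_three,
        Matrix.cons_val_succ, Fin.mk.injEq] <;>
      norm_num <;>
      first
        | assumption
        | (rw [real_inner_comm]; assumption)
        | (left; rw [norm_eq_sqrt_real_inner]; simp only [haa, hbb, hcc, huu, hA1A1, hB1B1, hC1C1, Real.sqrt_one])
  have h7 : 7 ≤ n := by
    have := (horth.linearIndependent).fintype_card_le_finrank
    simpa [hfr] using this
  by_contra hne7
  have h8 : 8 ≤ n := by omega
  obtain ⟨w, hww, hw⟩ := exists_unit_orthogonal ({a, b, c, u, A1, B1, C1} : Finset E) (by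
    have h1 : ({a, b, c, u, A1, B1, C1} : Finset E).card ≤ 7 := by
      apply le_trans (Finset.card_insert_le _ _)
      have h2 := Finset.card_insert_le b ({c, u, A1, B1, C1} : Finset E)
      have h3 := Finset.card_insert_le c ({u, A1, B1, C1} : Finset E)
      have h4 := Finset.card_insert_le u ({A1, B1, C1} : Finset E)
      have h5 := Finset.card_insert_le A1 ({B1, C1} : Finset E)
      have h6 := Finset.card_insert_le B1 ({C1} : Finset E)
      simp at h2 h3 h4 h5 h6 ⊢
      omega
    omega)
  have hwa : ⟦a, w⟧ = 0 := hw a (by simp)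
  have hwb : ⟦b, w⟧ = 0 := hw b (by simp)
  have hwc : ⟦c, w⟧ = 0 := hw c (by simp)
  have hwu : ⟦u, w⟧ = 0 := hw u (by simp)
  have hwA1 : ⟦A1, w⟧ = 0 := hw A1 (by simp)
  have hwB1 : ⟦B1, w⟧ = 0 := hw B1 (by simp)
  have hwC1 : ⟦C1, w⟧ = 0 := hw C1 (by simp)
  have huw : ⟦w, u⟧ = 0 := (real_inner_comm u w).trans hwu
  set v : E := C.p u w with hv
  have hvv : ⟦v, v⟧ = 1 := by rw [hv, C.lag, huu, hww, hwu]; ring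
  have hva : ⟦v, a⟧ = 0 := by rw [hv, C.cyc, C.cyc]; exact hwA1
  have hvb : ⟦v, b⟧ = 0 := by rw [hv, C.cyc, C.cyc]; exact hwB1
  have hvc : ⟦v, c⟧ = 0 := by rw [hv, C.cyc, C.cyc]; exact hwC1
  -- step 1: p A1 w = - p a v
  have hpwu : C.p w u = -v := by rw [hv, ← C.skew]
  have step1 : C.p A1 w = -(C.p a v) := by
    rw [hA1, C.skew (C.p a u) w,
      C.pol0 ((real_inner_comm a w).trans hwa) ((real_inner_comm u w).trans hwu) hau,
      hpwu, C.neg_right]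
    simp
  -- B2 := p b w
  set B2 : E := C.p b w with hB2
  have hB2a : ⟦B2, a⟧ = 0 := by rw [hB2, C.cyc, C.cyc, ← hc]; exact hwc
  have hB2u : ⟦B2, u⟧ = 0 := by
    rw [hB2, C.cyc, C.skew w u, inner_neg_left, ← hv]
    rw [hvb]; ring
  have hpB2u : C.p B2 u = C.p b v := by
    rw [hB2, C.skew (C.p b w) u,
      C.pol0 hub hwu hwb, hv]
    simp
  -- step 2 and 3
  have step2 : C.p A1 B2 = C.p b (C.p a v) := by
    rw [hB2, C.pol0 hA1b hwA1 hwb, step1, C.neg_right]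
    simp
  have step3 : C.p A1 B2 = C.p a (C.p b v) := by
    rw [C.skew A1 B2, hA1, C.pol0 hB2a hB2u hau, hpB2u]
    simp
  have step4 : C.p b (C.p a v) = -(C.p a (C.p b v)) :=
    C.pol0 hba ((real_inner_comm v b).trans hvb) ((real_inner_comm v a).trans hva)
  have hzero : C.p a (C.p b v) = 0 := by
    have e1 : C.p a (C.p b v) = -(C.p a (C.p b v)) :=
      step3.symm.trans (step2.trans step4)
    have h2 : (2:ℝ) • C.p a (C.p b v) = 0 := by
      rw [two_smul]
      nth_rewrite 2 [e1]
      abel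
    exact (smul_eq_zero.mp h2).resolve_left (by norm_num)
  -- p b v is a multiple of a
  obtain ⟨al, hal⟩ : ∃ r : ℝ, C.p b v = r • a := by
    refine ⟨⟦a, C.p b v⟧, ?_⟩
    have h := C.tr a (C.p b v)
    rw [hzero, C.zero_right, haa] at h
    linear_combination (norm := module) h
  -- v = al • c
  have hvac : v = al • c := by
    have h1 : C.p b (C.p b v) = -v :=
      C.tr0 hbb ((real_inner_comm v b).trans hvb)
    rw [hal, C.smul_right, hpba] at h1
    linear_combination (norm := module) h1
  -- contradiction
  have hcon : (1:ℝ) = 0 := by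
    have h := hvv
    nth_rewrite 2 [hvac] at h
    rw [real_inner_smul_right, hvc, mul_zero] at h
    exact h.symm
  norm_num at hcon



/-- Let `T ≠ 0` be a 3-form on a Euclidean vector space of dimension
`n ≥ 3` defining a vector cross product, i.e. `‖T(X,Y)‖² = 4(‖X‖²‖Y‖² - ⟨X,Y⟩²)` for all
`X, Y` (so that `(1/2)T(·,·)` is a binary cross product).  Then `n = 3` or `n = 7`. -/
theorem cross_product_dimension {n : ℕ} (hn : 3 ≤ n)
    (T : EuclideanSpace ℝ (Fin n) → EuclideanSpace ℝ (Fin n) → EuclideanSpace ℝ (Fin n) → ℝ)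
    (hlin : ∀ Y Z, IsLinearMap ℝ fun X => T X Y Z)
    (hskew1 : ∀ X Y Z, T X Y Z = - T Y X Z)
    (hskew2 : ∀ X Y Z, T X Y Z = - T X Z Y)
    (t : EuclideanSpace ℝ (Fin n) → EuclideanSpace ℝ (Fin n) → EuclideanSpace ℝ (Fin n))
    (ht : ∀ X Y Z, (inner ℝ (t X Y) Z : ℝ) = T X Y Z)
    (hT0 : ∃ X Y Z, T X Y Z ≠ 0)
    (hcross : ∀ X Y, ‖t X Y‖ ^ 2 = 4 * (‖X‖ ^ 2 * ‖Y‖ ^ 2 - (inner ℝ X Y : ℝ) ^ 2)) :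
    n = 3 ∨ n = 7 := by
  rcases lt_or_ge n 4 with h4 | h4
  · left; omega
  right
  have hcycT : ∀ X Y Z, T X Y Z = T Y Z X := by
    intro X Y Z
    rw [hskew1 X Y Z, hskew2 Y X Z, neg_neg]
  have ht_skew : ∀ X Y, t X Y = - t Y X := by
    intro X Y
    apply ext_inner_right ℝ
    intro z
    rw [inner_neg_left, ht, ht, hskew1]
  have ht_add : ∀ X Y Z, t X (Y + Z) = t X Y + t X Z := by
    intro X Y Z
    apply ext_inner_right ℝ
    intro z
    rw [inner_add_left, ht, ht, ht, hcycT X (Y + Z) z, (hlin z X).map_add,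
      ← hcycT X Y z, ← hcycT X Z z]
  have ht_smul : ∀ (r : ℝ) X Y, t X (r • Y) = r • t X Y := by
    intro r X Y
    apply ext_inner_right ℝ
    intro z
    rw [inner_smul_left_eq_smul, ht, ht, hcycT X (r • Y) z, (hlin z X).map_smul,
      ← hcycT X Y z]
  have hc' : ∀ X Y, ⟦t X Y, t X Y⟧ = 4 * (⟦X, X⟧ * ⟦Y, Y⟧ - ⟦X, Y⟧ ^ 2) := by
    intro X Y
    rw [real_inner_self_eq_norm_sq, real_inner_self_eq_norm_sq,
      real_inner_self_eq_norm_sq]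
    exact hcross X Y
  have ht_lag : ∀ X Y Z, ⟦t X Y, t X Z⟧ = 4 * (⟦X, X⟧ * ⟦Y, Z⟧ - ⟦X, Y⟧ * ⟦X, Z⟧) := by
    intro X Y Z
    have h := hc' X (Y + Z)
    have e1 : ⟦t X (Y + Z), t X (Y + Z)⟧
        = ⟦t X Y, t X Y⟧ + 2 * ⟦t X Y, t X Z⟧ + ⟦t X Z, t X Z⟧ := by
      rw [ht_add, inner_add_left, inner_add_right, inner_add_right,
        real_inner_comm (t X Y) (t X Z)]
      ring
    have e2 : ⟦Y + Z, Y + Z⟧ = ⟦Y, Y⟧ + 2 * ⟦Y, Z⟧ + ⟦Z, Z⟧ := by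
      rw [inner_add_left, inner_add_right, inner_add_right, real_inner_comm Y Z]
      ring
    have e3 : ⟦X, Y + Z⟧ = ⟦X, Y⟧ + ⟦X, Z⟧ := inner_add_right X Y Z
    rw [e1, e2, e3] at h
    linear_combination (h - hc' X Y - hc' X Z) / 2
  refine crossAux_dim h4 ⟨fun X Y => (2⁻¹ : ℝ) • t X Y, ?_, ?_, ?_, ?_, ?_⟩
  · intro x y
    show (2⁻¹ : ℝ) • t x y = -((2⁻¹ : ℝ) • t y x)
    rw [ht_skew x y, smul_neg]
  · intro x y z
    show (2⁻¹ : ℝ) • t x (y + z) = (2⁻¹ : ℝ) • t x y + (2⁻¹ : ℝ) • t x z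
    rw [ht_add, smul_add]
  · intro r x y
    show (2⁻¹ : ℝ) • t x (r • y) = r • ((2⁻¹ : ℝ) • t x y)
    rw [ht_smul, smul_comm]
  · intro x y z
    show (inner ℝ ((2⁻¹ : ℝ) • t x y) z : ℝ) = (inner ℝ ((2⁻¹ : ℝ) • t y z) x : ℝ)
    rw [real_inner_smul_left, real_inner_smul_left, ht, ht, hcycT]
  · intro x y z
    show (inner ℝ ((2⁻¹ : ℝ) • t x y) ((2⁻¹ : ℝ) • t x z) : ℝ) = _
    rw [real_inner_smul_left, real_inner_smul_right, ht_lag]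
    ring
end
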